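/- arXiv:2405.02952 — 11 statements merged into one kernel-verified Lean document; each statement's English description precedes it below -/
import Mathlib

section
/- Let f : ℝ^d → ℝ be differentiable at θ and let v be a random vector in ℝ^d whose scalar components v_i are independent with zero mean and unit variance. Then the forward gradient g_v(θ) = (∇f(θ)·v)v is an unbiased estimator of the gradient, i.e. E[g_v(θ)] = ∇f(θ). -/
open MeasureTheory ProbabilityTheory
open scoped RealInnerProductSpace

lemma euclidean_sum_single_apply {d : ℕ} (c : Fin d → ℝ) (i : Fin d) :
    (∑ j, c j • EuclideanSpace.single j (1 : ℝ)) i = c i := by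
  rw [WithLp.ofLp_sum, Finset.sum_apply i Finset.univ fun j => (c j • EuclideanSpace.single j (1 : ℝ)).ofLp]
  simp [EuclideanSpace.single_apply]

/-- **Unbiasedness of the forward gradient.**
If the components of the random vector `v` are independent with zero mean and unit
variance, then the forward gradient `g_v(θ) = (∇f(θ)·v) v` is an unbiased estimator
of the gradient `∇f(θ)`. -/
theorem forward_gradient_unbiased
    {Ω : Type*} [MeasurableSpace Ω] {μ : Measure Ω} [IsProbabilityMeasure μ]
    {d : ℕ} (f : EuclideanSpace ℝ (Fin d) → ℝ) (θ : EuclideanSpace ℝ (Fin d))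
    (hf : DifferentiableAt ℝ f θ)
    (v : Ω → EuclideanSpace ℝ (Fin d)) (hmeas : Measurable v)
    (hindep : iIndepFun (fun i ω => v ω i) μ)
    (hL2 : ∀ i, MemLp (fun ω => v ω i) 2 μ)
    (hmean : ∀ i, ∫ ω, v ω i ∂μ = 0)
    (hvar : ∀ i, ∫ ω, (v ω i) ^ 2 ∂μ = 1) :
    ∫ ω, (⟪gradient f θ, v ω⟫ • v ω) ∂μ = gradient f θ := by
  set g : EuclideanSpace ℝ (Fin d) := gradient f θ with hg
  -- integrability of products of coordinates
  have hint : ∀ k j, Integrable (fun ω => v ω k * v ω j) μ := by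
    intro k j
    rcases eq_or_ne k j with rfl | hkj
    · simpa [sq] using (hL2 k).integrable_sq
    · exact (hindep.indepFun hkj).integrable_mul
        ((hL2 k).integrable one_le_two) ((hL2 j).integrable one_le_two)
  -- the cross moments
  have hcross : ∀ k j, ∫ ω, v ω k * v ω j ∂μ = if k = j then 1 else 0 := by
    intro k j
    rcases eq_or_ne k j with rfl | hkj
    · simpa [sq] using hvar k
    · have h := (hindep.indepFun hkj).integral_mul_eq_mul_integral (hL2 k).1 (hL2 j).1
      rw [if_neg hkj]
      simpa [Pi.mul_apply, hmean k] using h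
  -- key coordinate computation
  have key : ∀ j, ∫ ω, ⟪g, v ω⟫ * v ω j ∂μ = g j := by
    intro j
    have h1 : (fun ω => ⟪g, v ω⟫ * v ω j)
        = fun ω => ∑ k, g k * (v ω k * v ω j) := by
      funext ω
      simp [PiLp.inner_apply, Finset.sum_mul, mul_assoc]
      exact Finset.sum_congr rfl fun x _ => by ring
    rw [h1, integral_finset_sum]
    · have : ∀ k, ∫ ω, g k * (v ω k * v ω j) ∂μ
          = g k * (if k = j then 1 else 0) := by
        intro k
        rw [integral_const_mul, hcross]
      simp [this]
    · intro k _
      exact (hint k j).const_mul _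
  -- decompose the vector-valued integrand in coordinates
  have hdecomp : (fun ω => (⟪g, v ω⟫ • v ω : EuclideanSpace ℝ (Fin d)))
      = fun ω => ∑ j, (⟪g, v ω⟫ * v ω j) • (EuclideanSpace.single j (1 : ℝ)) := by
    funext ω
    apply PiLp.ext
    intro i
    rw [euclidean_sum_single_apply]
    simp [mul_comm]
  have hint' : ∀ j, Integrable (fun ω => ⟪g, v ω⟫ * v ω j) μ := by
    intro j
    have h1 : (fun ω => ⟪g, v ω⟫ * v ω j)
        = fun ω => ∑ k, g k * (v ω k * v ω j) := by
      funext ω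
      simp [PiLp.inner_apply, Finset.sum_mul, mul_assoc]
      exact Finset.sum_congr rfl fun x _ => by ring
    rw [h1]
    exact integrable_finset_sum _ fun k _ => (hint k j).const_mul _
  rw [hdecomp, integral_finset_sum _ (fun j _ => (hint' j).smul_const _)]
  have : ∀ j, ∫ ω, (⟪g, v ω⟫ * v ω j) • (EuclideanSpace.single j (1 : ℝ)) ∂μ
      = (g j) • EuclideanSpace.single j (1 : ℝ) := by
    intro j
    rw [integral_smul_const, key]
  rw [Finset.sum_congr rfl fun j _ => this j]
  apply PiLp.ext
  intro i
  rw [euclidean_sum_single_apply (fun j => g j) i]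
end

section
/- Let f : ℝ^d → ℝ be differentiable at θ and let v be a random vector in ℝ^d whose components v_i are independent Rademacher variables, i.e. P(v_i = 1) = P(v_i = -1) = 1/2 for all i. Then the mean squared deviation of the forward gradient satisfies E[‖g_v(θ) − ∇f(θ)‖²] = (d − 1)‖∇f(θ)‖². -/
open MeasureTheory ProbabilityTheory
open scoped RealInnerProductSpace

/-- **Variance of the forward gradient for Rademacher directions.**
If the components of `v` are independent Rademacher variables, then the mean squared
deviation of the forward gradient `g_v(θ) = (∇f(θ)·v) v` from `∇f(θ)` equals
`(d - 1) ‖∇f(θ)‖²`. -/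
theorem forward_gradient_mse_rademacher
    {Ω : Type*} [MeasurableSpace Ω] {μ : Measure Ω} [IsProbabilityMeasure μ]
    {d : ℕ} (f : EuclideanSpace ℝ (Fin d) → ℝ) (θ : EuclideanSpace ℝ (Fin d))
    (hf : DifferentiableAt ℝ f θ)
    (v : Ω → EuclideanSpace ℝ (Fin d)) (hmeas : Measurable v)
    (hindep : iIndepFun (fun i ω => v ω i) μ)
    (hrad : ∀ i, μ {ω | v ω i = 1} = 1/2 ∧ μ {ω | v ω i = -1} = 1/2) :
    ∫ ω, ‖(⟪gradient f θ, v ω⟫ • v ω) - gradient f θ‖ ^ 2 ∂μ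
      = ((d : ℝ) - 1) * ‖gradient f θ‖ ^ 2 := by
  set g : EuclideanSpace ℝ (Fin d) := gradient f θ with hg
  set X : Fin d → Ω → ℝ := fun i ω => v ω i with hX
  have Xmeas : ∀ i, Measurable (X i) := fun i => (measurable_pi_apply i).comp ((WithLp.measurable_ofLp 2 _).comp hmeas)
  have Ameas : ∀ i, MeasurableSet {ω | v ω i = 1} := fun i =>
    (Xmeas i) (measurableSet_singleton 1)
  have Bmeas : ∀ i, MeasurableSet {ω | v ω i = -1} := fun i =>
    (Xmeas i) (measurableSet_singleton (-1))
  -- a.e. each coordinate is ±1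
  have hae1 : ∀ i, ∀ᵐ ω ∂μ, v ω i = 1 ∨ v ω i = -1 := by
    intro i
    have hdisj : Disjoint {ω | v ω i = 1} {ω | v ω i = -1} := by
      rw [Set.disjoint_left]
      intro ω h1 h2
      simp only [Set.mem_setOf_eq] at h1 h2
      rw [h1] at h2; norm_num at h2
    have hunion : μ ({ω | v ω i = 1} ∪ {ω | v ω i = -1}) = 1 := by
      rw [measure_union hdisj (Bmeas i), (hrad i).1, (hrad i).2]
      exact ENNReal.add_halves 1
    have : μ ({ω | v ω i = 1} ∪ {ω | v ω i = -1})ᶜ = 0 := by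
      rw [measure_compl ((Ameas i).union (Bmeas i)) (measure_ne_top μ _), hunion,
        measure_univ, tsub_self]
    filter_upwards [measure_eq_zero_iff_ae_notMem.mp this] with ω hω
    simpa [Set.mem_union, Set.mem_setOf_eq, not_or, or_iff_not_imp_left] using hω
  have hae : ∀ᵐ ω ∂μ, ∀ i, v ω i = 1 ∨ v ω i = -1 := ae_all_iff.mpr hae1
  -- integrability of coordinates
  have Xbdd : ∀ i, ∀ᵐ ω ∂μ, ‖X i ω‖ ≤ 1 := by
    intro i
    filter_upwards [hae1 i] with ω hω
    rcases hω with h | h <;> simp [hX, h]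
  have Xint : ∀ i, Integrable (X i) μ := by
    intro i
    exact (integrable_const (1 : ℝ)).mono' (Xmeas i).aestronglyMeasurable (Xbdd i)
  -- expectations
  have EX : ∀ i, ∫ ω, X i ω ∂μ = 0 := by
    intro i
    have heq : X i =ᵐ[μ] fun ω =>
        ({ω | v ω i = 1} : Set Ω).indicator (fun _ => (2 : ℝ)) ω - 1 := by
      filter_upwards [hae1 i] with ω hω
      rcases hω with h | h
      · have hm : ω ∈ {ω | v ω i = 1} := h
        rw [Set.indicator_of_mem hm]
        simp only [hX, h]; norm_num
      · have : ω ∉ {ω | v ω i = 1} := by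
          simp only [Set.mem_setOf_eq, h]; norm_num
        rw [Set.indicator_of_notMem this]
        simp only [hX, h]; norm_num
    rw [integral_congr_ae heq, integral_sub _ (integrable_const 1),
      integral_indicator_const _ (Ameas i), integral_const]
    · rw [measureReal_def, (hrad i).1, probReal_univ]
      simp [ENNReal.toReal_inv]
    · exact (integrable_const (2:ℝ)).indicator (Ameas i)
  have EXX : ∀ i j, i ≠ j → ∫ ω, X i ω * X j ω ∂μ = 0 := by
    intro i j hij
    have hind : IndepFun (X i) (X j) μ := hindep.indepFun hij
    have := hind.integral_mul_eq_mul_integral (Xint i).aestronglyMeasurable (Xint j).aestronglyMeasurable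
    simp only [Pi.mul_apply] at this
    rw [this, EX i,
      zero_mul]
  have EXsq : ∀ i, ∫ ω, X i ω * X i ω ∂μ = 1 := by
    intro i
    have heq : (fun ω => X i ω * X i ω) =ᵐ[μ] fun _ => (1 : ℝ) := by
      filter_upwards [hae1 i] with ω hω
      rcases hω with h | h <;> simp [hX, h]
    rw [integral_congr_ae heq, integral_const]; simp
  -- inner product expansion
  have hSdef : ∀ ω, ⟪g, v ω⟫ = ∑ i, g i * X i ω := by
    intro ω
    simp [hX, PiLp.inner_apply, RCLike.inner_apply, mul_comm]
  -- integrability of products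
  have prodint : ∀ i j, Integrable (fun ω => X i ω * X j ω) μ := by
    intro i j
    refine (integrable_const (1 : ℝ)).mono'
      ((Xmeas i).mul (Xmeas j)).aestronglyMeasurable ?_
    filter_upwards [Xbdd i, Xbdd j] with ω h1 h2
    calc ‖X i ω * X j ω‖ = ‖X i ω‖ * ‖X j ω‖ := norm_mul _ _
      _ ≤ 1 * 1 := mul_le_mul h1 h2 (norm_nonneg _) zero_le_one
      _ = 1 := one_mul 1
  have hexp : (fun ω => ⟪g, v ω⟫ ^ 2)
      = fun ω => ∑ i, ∑ j, (g i * g j) * (X i ω * X j ω) := by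
    funext ω
    rw [hSdef, sq, Finset.sum_mul_sum]
    congr 1; funext i; congr 1; funext j; ring
  have Sint : Integrable (fun ω => ⟪g, v ω⟫ ^ 2) μ := by
    rw [hexp]
    exact integrable_finset_sum _ fun i _ => integrable_finset_sum _ fun j _ =>
      ((prodint i j).const_mul _)
  have ES2 : ∫ ω, ⟪g, v ω⟫ ^ 2 ∂μ = ‖g‖ ^ 2 := by
    rw [hexp]
    rw [integral_finset_sum _ fun i _ =>
      integrable_finset_sum _ fun j _ => ((prodint i j).const_mul _)]
    have h1 : ∀ i ∈ Finset.univ, (∫ ω, ∑ j, (g i * g j) * (X i ω * X j ω) ∂μ)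
        = g i ^ 2 := by
      intro i _
      rw [integral_finset_sum _ fun j _ => ((prodint i j).const_mul _)]
      have h2 : ∀ j ∈ Finset.univ, (∫ ω, (g i * g j) * (X i ω * X j ω) ∂μ)
          = if j = i then g i ^ 2 else 0 := by
        intro j _
        rw [integral_const_mul]
        by_cases hji : j = i
        · subst hji; rw [EXsq]; simp [sq]
        · rw [EXX i j (Ne.symm hji)]; simp [hji]
      rw [Finset.sum_congr rfl h2, Finset.sum_ite_eq']
      simp
    rw [Finset.sum_congr rfl h1]
    have : ‖g‖ ^ 2 = ∑ i, g i ^ 2 := by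
      rw [EuclideanSpace.norm_sq_eq]
      simp [Real.norm_eq_abs, sq_abs]
    rw [this]
  -- pointwise identity a.e.
  have hpt : ∀ᵐ ω ∂μ, ‖(⟪g, v ω⟫ • v ω) - g‖ ^ 2
      = ((d : ℝ) - 2) * ⟪g, v ω⟫ ^ 2 + ‖g‖ ^ 2 := by
    filter_upwards [hae] with ω hω
    have hsq : ∀ i, v ω i * v ω i = 1 := by
      intro i; rcases hω i with h | h <;> rw [h] <;> norm_num
    have hnv : ‖v ω‖ ^ 2 = (d : ℝ) := by
      rw [EuclideanSpace.norm_sq_eq]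
      simp [Real.norm_eq_abs, pow_two, hsq]
    have e1 : ‖⟪g, v ω⟫ • v ω‖ ^ 2 = ⟪g, v ω⟫ ^ 2 * ‖v ω‖ ^ 2 := by
      rw [norm_smul, mul_pow, Real.norm_eq_abs, sq_abs]
    have e2 : ⟪⟪g, v ω⟫ • v ω, g⟫ = ⟪g, v ω⟫ * ⟪g, v ω⟫ := by
      rw [real_inner_smul_left, real_inner_comm]
    rw [norm_sub_sq_real, e1, e2, hnv]
    ring
  rw [integral_congr_ae hpt,
    integral_add (Sint.const_mul _) (integrable_const _), integral_const_mul,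
    integral_const, ES2]
  simp only [probReal_univ, measure_univ, ENNReal.toReal_one, smul_eq_mul, one_mul]
  ring
end

section
/- Let f, f̂ : ℝ^d → ℝ be differentiable at θ and let v be a random vector in ℝ^d whose scalar components v_i are independent with zero mean and unit variance. Then the control variate forward gradient h_v(θ) = (∇f(θ)·v)v − (∇f̂(θ)·v)v + ∇f̂(θ) is an unbiased estimator of ∇f(θ), i.e. E[h_v(θ)] = ∇f(θ). -/
open MeasureTheory ProbabilityTheory
open scoped RealInnerProductSpace

section aux

variable {Ω : Type*} [MeasurableSpace Ω] {μ : Measure Ω} [IsProbabilityMeasure μ]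
    {d : ℕ} (v : Ω → EuclideanSpace ℝ (Fin d))

lemma l2_mul {a b : Ω → ℝ} (ha : MemLp a 2 μ) (hb : MemLp b 2 μ) :
    Integrable (fun ω => a ω * b ω) μ := by
  have h := (((ha.add hb).integrable_sq.sub ha.integrable_sq).sub hb.integrable_sq).div_const 2
  exact h.congr (Filter.Eventually.of_forall fun ω => by simp [Pi.add_apply]; ring)

lemma cv_decomp (w x : EuclideanSpace ℝ (Fin d)) :
    ⟪w, x⟫ • x = ∑ i, (⟪w, x⟫ * x i) • EuclideanSpace.single i (1:ℝ) := by
  ext k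
  rw [WithLp.ofLp_sum, Finset.sum_apply]
  simp [EuclideanSpace.single_apply, mul_ite, Finset.sum_ite_eq']

lemma cv_inner_sum (w x : EuclideanSpace ℝ (Fin d)) :
    ⟪w, x⟫ = ∑ j, w j * x j := by
  simp [PiLp.inner_apply, RCLike.inner_apply, mul_comm]

lemma cv_key
    (hindep : iIndepFun (fun i ω => v ω i) μ)
    (hL2 : ∀ i, MemLp (fun ω => v ω i) 2 μ)
    (hmean : ∀ i, ∫ ω, v ω i ∂μ = 0)
    (hvar : ∀ i, ∫ ω, (v ω i) ^ 2 ∂μ = 1)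
    (w : EuclideanSpace ℝ (Fin d)) :
    Integrable (fun ω => ⟪w, v ω⟫ • v ω) μ ∧ (∫ ω, ⟪w, v ω⟫ • v ω ∂μ) = w := by
  have hmul : ∀ i j, Integrable (fun ω => v ω j * v ω i) μ := fun i j =>
    l2_mul (hL2 j) (hL2 i)
  have hc : ∀ i, Integrable (fun ω => ⟪w, v ω⟫ * v ω i) μ := by
    intro i
    have : (fun ω => ⟪w, v ω⟫ * v ω i) = fun ω => ∑ j, w j * (v ω j * v ω i) := by
      funext ω
      rw [cv_inner_sum, Finset.sum_mul]
      simp [mul_assoc]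
    rw [this]
    exact integrable_finset_sum _ (fun j _ => (hmul i j).const_mul _)
  have hint : ∀ i, (∫ ω, ⟪w, v ω⟫ * v ω i ∂μ) = w i := by
    intro i
    have h1 : (∫ ω, ⟪w, v ω⟫ * v ω i ∂μ) = ∑ j, w j * ∫ ω, v ω j * v ω i ∂μ := by
      have : (fun ω => ⟪w, v ω⟫ * v ω i) = fun ω => ∑ j, w j * (v ω j * v ω i) := by
        funext ω
        rw [cv_inner_sum, Finset.sum_mul]
        simp [mul_assoc]
      rw [this, integral_finset_sum _ (fun j _ => ((hmul i j).const_mul _))]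
      simp [integral_const_mul]
    rw [h1]
    have hij : ∀ j, (∫ ω, v ω j * v ω i ∂μ) = if j = i then 1 else 0 := by
      intro j
      by_cases h : j = i
      · subst h
        simp only [if_pos rfl, ← hvar j]
        congr 1; funext ω; ring
      · rw [if_neg h]
        have hInd : IndepFun (fun ω => v ω j) (fun ω => v ω i) μ := hindep.indepFun h
        have hM := hInd.integral_mul_eq_mul_integral (hL2 j).aestronglyMeasurable (hL2 i).aestronglyMeasurable
        simp only [Pi.mul_apply] at hM
        rw [hM,
          hmean j, hmean i, mul_zero]
    simp [hij, Finset.sum_ite_eq']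
  constructor
  · have : (fun ω => ⟪w, v ω⟫ • v ω)
        = fun ω => ∑ i, (⟪w, v ω⟫ * v ω i) • EuclideanSpace.single i (1:ℝ) := by
      funext ω; exact cv_decomp w (v ω)
    rw [this]
    exact integrable_finset_sum _ (fun i _ => (hc i).smul_const _)
  · have : (fun ω => ⟪w, v ω⟫ • v ω)
        = fun ω => ∑ i, (⟪w, v ω⟫ * v ω i) • EuclideanSpace.single i (1:ℝ) := by
      funext ω; exact cv_decomp w (v ω)
    rw [this, integral_finset_sum _ (fun i _ => (hc i).smul_const _)]
    have : ∀ i ∈ Finset.univ, (∫ ω, (⟪w, v ω⟫ * v ω i) • EuclideanSpace.single i (1:ℝ) ∂μ)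
        = (w i) • EuclideanSpace.single i (1:ℝ) := by
      intro i _; rw [integral_smul_const, hint i]
    rw [Finset.sum_congr rfl this]
    ext k
    rw [WithLp.ofLp_sum, Finset.sum_apply]
    simp [EuclideanSpace.single_apply, mul_ite, Finset.sum_ite_eq']

end aux

/-- **Unbiasedness of the control variate forward gradient.**
If the components of `v` are independent with zero mean and unit variance, then
`h_v(θ) = (∇f(θ)·v)v − (∇f̂(θ)·v)v + ∇f̂(θ)` is an unbiased estimator of `∇f(θ)`. -/
theorem cv_forward_gradient_unbiased
    {Ω : Type*} [MeasurableSpace Ω] {μ : Measure Ω} [IsProbabilityMeasure μ]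
    {d : ℕ} (f fhat : EuclideanSpace ℝ (Fin d) → ℝ) (θ : EuclideanSpace ℝ (Fin d))
    (hf : DifferentiableAt ℝ f θ) (hfhat : DifferentiableAt ℝ fhat θ)
    (v : Ω → EuclideanSpace ℝ (Fin d)) (hmeas : Measurable v)
    (hindep : iIndepFun (fun i ω => v ω i) μ)
    (hL2 : ∀ i, MemLp (fun ω => v ω i) 2 μ)
    (hmean : ∀ i, ∫ ω, v ω i ∂μ = 0)
    (hvar : ∀ i, ∫ ω, (v ω i) ^ 2 ∂μ = 1) :
    ∫ ω, (⟪gradient f θ, v ω⟫ • v ω - ⟪gradient fhat θ, v ω⟫ • v ω + gradient fhat θ) ∂μ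
      = gradient f θ := by
  set gf := gradient f θ
  set gh := gradient fhat θ
  obtain ⟨hI, hE⟩ := cv_key v hindep hL2 hmean hvar (gf - gh)
  have heq : (fun ω => ⟪gf, v ω⟫ • v ω - ⟪gh, v ω⟫ • v ω + gh)
      = fun ω => ⟪gf - gh, v ω⟫ • v ω + gh := by
    funext ω
    rw [inner_sub_left, sub_smul]
  rw [heq, integral_add hI (integrable_const _), hE, integral_const]
  simp
end

section
/- Let f, f̂ : ℝ^d → ℝ be differentiable at θ and let v be a random vector in ℝ^d whose components v_i are independent Rademacher variables, i.e. P(v_i = 1) = P(v_i = -1) = 1/2 for all i. Then the mean squared deviation of the control variate forward gradient satisfies E[‖h_v(θ) − ∇f(θ)‖²] = (d − 1)‖∇f(θ) − ∇f̂(θ)‖². -/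
open MeasureTheory ProbabilityTheory
open scoped RealInnerProductSpace

/-- **Variance of the control variate forward gradient for Rademacher directions.**
If the components of `v` are independent Rademacher variables, then the mean squared
deviation of `h_v(θ) = (∇f(θ)·v)v − (∇f̂(θ)·v)v + ∇f̂(θ)` from `∇f(θ)` equals
`(d - 1) ‖∇f(θ) − ∇f̂(θ)‖²`. -/
theorem cv_forward_gradient_mse_rademacher
    {Ω : Type*} [MeasurableSpace Ω] {μ : Measure Ω} [IsProbabilityMeasure μ]
    {d : ℕ} (f fhat : EuclideanSpace ℝ (Fin d) → ℝ) (θ : EuclideanSpace ℝ (Fin d))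
    (hf : DifferentiableAt ℝ f θ) (hfhat : DifferentiableAt ℝ fhat θ)
    (v : Ω → EuclideanSpace ℝ (Fin d)) (hmeas : Measurable v)
    (hindep : iIndepFun (fun i ω => v ω i) μ)
    (hrad : ∀ i, μ {ω | v ω i = 1} = 1/2 ∧ μ {ω | v ω i = -1} = 1/2) :
    ∫ ω, ‖(⟪gradient f θ, v ω⟫ • v ω - ⟪gradient fhat θ, v ω⟫ • v ω + gradient fhat θ)
          - gradient f θ‖ ^ 2 ∂μ
      = ((d : ℝ) - 1) * ‖gradient f θ - gradient fhat θ‖ ^ 2 := by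
  set g := gradient f θ with hg
  set gh := gradient fhat θ with hgh
  set u : EuclideanSpace ℝ (Fin d) := g - gh with hu
  have hmeasi : ∀ i, Measurable (fun ω => v ω i) := fun i =>
    (measurable_pi_apply i).comp ((PiLp.continuous_ofLp 2 _).measurable.comp hmeas)
  -- a.e. each coordinate is ±1
  have hae : ∀ᵐ ω ∂μ, ∀ i, v ω i = 1 ∨ v ω i = -1 := by
    rw [ae_all_iff]
    intro i
    have hA : MeasurableSet {ω | v ω i = 1} := (hmeasi i) (measurableSet_singleton 1)
    have hB : MeasurableSet {ω | v ω i = -1} := (hmeasi i) (measurableSet_singleton (-1))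
    have hdisj : Disjoint {ω | v ω i = 1} {ω | v ω i = -1} := by
      rw [Set.disjoint_left]
      intro ω h1 h2
      simp only [Set.mem_setOf_eq] at h1 h2
      rw [h1] at h2
      norm_num at h2
    have hunion : μ ({ω | v ω i = 1} ∪ {ω | v ω i = -1}) = 1 := by
      rw [measure_union hdisj hB, (hrad i).1, (hrad i).2, ENNReal.div_add_div_same]
      rw [one_add_one_eq_two]
      exact ENNReal.div_self two_ne_zero ENNReal.ofNat_ne_top
    rw [ae_iff]
    have hcompl : {ω | ¬(v ω i = 1 ∨ v ω i = -1)}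
        = ({ω | v ω i = 1} ∪ {ω | v ω i = -1})ᶜ := by
      ext ω; simp [not_or]
    rw [hcompl, measure_compl (hA.union hB) (measure_ne_top μ _), hunion,
      measure_univ, tsub_self]
  -- a.e. squared coordinates are 1
  have hvsq : ∀ᵐ ω ∂μ, ∀ i, v ω i * v ω i = 1 := by
    filter_upwards [hae] with ω h i
    rcases h i with h1 | h1 <;> rw [h1] <;> norm_num
  -- a.e. norm squared is d
  have hnorm : ∀ᵐ ω ∂μ, ‖v ω‖ ^ 2 = (d : ℝ) := by
    filter_upwards [hvsq] with ω h
    rw [← real_inner_self_eq_norm_sq, PiLp.inner_apply]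
    simp only [RCLike.inner_apply, conj_trivial]
    simp [h]
  -- integrability of pairwise products
  have hint_ij : ∀ i j, Integrable (fun ω => v ω i * v ω j) μ := by
    intro i j
    apply Integrable.mono' (integrable_const (1 : ℝ))
      (((hmeasi i).mul (hmeasi j)).aestronglyMeasurable)
    filter_upwards [hae] with ω h
    rcases h i with h1 | h1 <;> rcases h j with h2 | h2 <;> rw [Pi.mul_apply, h1, h2] <;> norm_num
  have hint_i : ∀ i, Integrable (fun ω => v ω i) μ := by
    intro i
    apply Integrable.mono' (integrable_const (1 : ℝ)) (hmeasi i).aestronglyMeasurable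
    filter_upwards [hae] with ω h
    rcases h i with h1 | h1 <;> rw [h1] <;> norm_num
  -- mean zero
  have hEi : ∀ i, ∫ ω, v ω i ∂μ = 0 := by
    intro i
    have hA : MeasurableSet {ω | v ω i = 1} := (hmeasi i) (measurableSet_singleton 1)
    have hB : MeasurableSet {ω | v ω i = -1} := (hmeasi i) (measurableSet_singleton (-1))
    have heq : (fun ω => v ω i) =ᵐ[μ]
        fun ω => Set.indicator {ω | v ω i = 1} (fun _ => (1:ℝ)) ω
          + Set.indicator {ω | v ω i = -1} (fun _ => (-1:ℝ)) ω := by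
      filter_upwards [hae] with ω h
      rcases h i with h1 | h1 <;>
        simp [Set.indicator_apply, h1] <;> norm_num
    rw [integral_congr_ae heq, integral_add
      ((integrable_const _).indicator hA) ((integrable_const _).indicator hB),
      integral_indicator_const _ hA, integral_indicator_const _ hB, measureReal_def, measureReal_def,
      (hrad i).1, (hrad i).2]
    norm_num
  -- second moments
  have hEij : ∀ i j, i ≠ j → ∫ ω, v ω i * v ω j ∂μ = 0 := by
    intro i j hij
    have hind : IndepFun (fun ω => v ω i) (fun ω => v ω j) μ := hindep.indepFun hij
    have h := hind.integral_fun_mul_eq_mul_integral (hint_i i).aestronglyMeasurable (hint_i j).aestronglyMeasurable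
    simpa [hEi i, hEi j] using h
  have hEii : ∀ i, ∫ ω, v ω i * v ω i ∂μ = 1 := by
    intro i
    have : (fun ω => v ω i * v ω i) =ᵐ[μ] fun _ => (1:ℝ) := by
      filter_upwards [hvsq] with ω h using h i
    rw [integral_congr_ae this, integral_const, probReal_univ]
    simp
  -- expand inner product squared
  have hrw : ∀ ω, ⟪u, v ω⟫ ^ 2 = ∑ i, ∑ j, (u i * u j) * (v ω i * v ω j) := by
    intro ω
    rw [PiLp.inner_apply]
    simp only [RCLike.inner_apply, conj_trivial]
    rw [sq, Finset.sum_mul_sum]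
    apply Finset.sum_congr rfl
    intro i _
    apply Finset.sum_congr rfl
    intro j _
    ring
  have key : ∫ ω, ⟪u, v ω⟫ ^ 2 ∂μ = ‖u‖ ^ 2 := by
    simp_rw [hrw]
    rw [integral_finset_sum _ (fun i _ => integrable_finset_sum _
      (fun j _ => (hint_ij i j).const_mul _))]
    have : ∀ i ∈ Finset.univ, (∫ ω, ∑ j, (u i * u j) * (v ω i * v ω j) ∂μ) = u i * u i := by
      intro i _
      rw [integral_finset_sum _ (fun j _ => (hint_ij i j).const_mul _)]
      rw [Finset.sum_eq_single i]
      · rw [integral_const_mul, hEii i, mul_one]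
      · intro j _ hji
        rw [integral_const_mul, hEij i j (Ne.symm hji), mul_zero]
      · intro h; exact absurd (Finset.mem_univ i) h
    rw [Finset.sum_congr rfl this, ← real_inner_self_eq_norm_sq, PiLp.inner_apply]
    simp only [RCLike.inner_apply, conj_trivial]
  -- integrability of the inner product squared
  have hintX : Integrable (fun ω => ⟪u, v ω⟫ ^ 2) μ := by
    simp_rw [hrw]
    exact integrable_finset_sum _ (fun i _ => integrable_finset_sum _
      (fun j _ => (hint_ij i j).const_mul _))
  -- rewrite the integrand
  have hintg : ∀ᵐ ω ∂μ, ‖(⟪g, v ω⟫ • v ω - ⟪gh, v ω⟫ • v ω + gh) - g‖ ^ 2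
      = ((d : ℝ) - 2) * ⟪u, v ω⟫ ^ 2 + ‖u‖ ^ 2 := by
    filter_upwards [hnorm] with ω hω
    have h1 : (⟪g, v ω⟫ • v ω - ⟪gh, v ω⟫ • v ω + gh) - g = ⟪u, v ω⟫ • v ω - u := by
      rw [hu, inner_sub_left, sub_smul]
      abel
    rw [h1]
    have h2 : ‖⟪u, v ω⟫ • v ω - u‖ ^ 2
        = ⟪u, v ω⟫ ^ 2 * ‖v ω‖ ^ 2 - 2 * ⟪u, v ω⟫ ^ 2 + ‖u‖ ^ 2 := by
      rw [norm_sub_sq_real, norm_smul, real_inner_smul_left, mul_pow,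
        Real.norm_eq_abs, sq_abs, real_inner_comm (v ω) u]
      ring
    rw [h2, hω]
    ring
  rw [integral_congr_ae hintg, integral_add (hintX.const_mul _) (integrable_const _),
    integral_const_mul, key, integral_const, probReal_univ]
  simp only [ENNReal.toReal_one, one_smul]
  ring
end

section
/- Let f, f̂ : ℝ^d → ℝ be differentiable at θ and let v be a random vector in ℝ^d whose scalar components v_i are independent with zero mean and unit variance. Then the mean squared deviation of the control variate forward gradient satisfies E[‖h_v(θ) − ∇f(θ)‖²] = Σ_{i=1}^d (∂f/∂θ_i(θ) − ∂f̂/∂θ_i(θ))² · Var[v_i²] + (d − 1)‖∇f(θ) − ∇f̂(θ)‖². In particular, among all such distributions this quantity is minimized exactly when Var[v_i²] = 0 for every i, which holds when the v_i are independent Rademacher variables. -/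
open MeasureTheory ProbabilityTheory
open scoped RealInnerProductSpace

open scoped ENNReal

section CVAux

variable {Ω : Type*} [MeasurableSpace Ω] {μ : Measure Ω} [IsProbabilityMeasure μ]

lemma mul_memLp {X Y : Ω → ℝ} {p q r : ℝ≥0∞} (hX : MemLp X p μ) (hY : MemLp Y q μ)
    (h : 1/r = 1/p + 1/q) : MemLp (fun ω => X ω * Y ω) r μ :=
  haveI : ENNReal.HolderTriple p q r := ⟨by simpa only [one_div] using h.symm⟩
  hY.smul hX

lemma mul_int2 {X Y : Ω → ℝ} (hX : MemLp X 2 μ) (hY : MemLp Y 2 μ) :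
    Integrable (fun ω => X ω * Y ω) μ :=
  (mul_memLp hX hY (by rw [ENNReal.div_add_div_same, ENNReal.div_eq_div_iff] <;> norm_num)).integrable le_rfl

lemma mul_memLp2 {X Y : Ω → ℝ} (hX : MemLp X 4 μ) (hY : MemLp Y 4 μ) :
    MemLp (fun ω => X ω * Y ω) 2 μ :=
  mul_memLp hX hY (by rw [ENNReal.div_add_div_same, ENNReal.div_eq_div_iff] <;> norm_num)

lemma mul_int24 {X Y : Ω → ℝ} (hX : MemLp X 2 μ) (hY : MemLp Y 4 μ) :
    Integrable (fun ω => X ω * Y ω) μ :=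
  (mul_memLp hX hY (show 1/(4/3 : ℝ≥0∞) = _ by
    rw [show (1:ℝ≥0∞)/2 = 2/4 by rw [ENNReal.div_eq_div_iff] <;> norm_num,
      ENNReal.div_add_div_same, one_div, ENNReal.inv_div (by norm_num) (by norm_num)]
    rw [ENNReal.div_eq_div_iff] <;> norm_num)).integrable
    (by rw [ENNReal.le_div_iff_mul_le (by norm_num) (by norm_num)]; norm_num)

section main
variable {d : ℕ} {V : Fin d → Ω → ℝ}

lemma int_pair (hVmeas : ∀ i, Measurable (V i))
    (hindep : iIndepFun V μ)
    (hL4 : ∀ i, MemLp (V i) 4 μ)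
    (hmean : ∀ i, ∫ ω, V i ω ∂μ = 0)
    (hvar : ∀ i, ∫ ω, (V i ω) ^ 2 ∂μ = 1)
    (j i : Fin d) :
    ∫ ω, V j ω * V i ω ∂μ = if j = i then 1 else 0 := by
  by_cases h : j = i
  · subst h
    simp only [if_true]
    rw [← hvar j]
    exact integral_congr_ae (Filter.Eventually.of_forall fun ω => (sq (V j ω)).symm)
  · simp only [h, if_false]
    have hI : IndepFun (V j) (V i) μ := hindep.indepFun h
    have := hI.integral_mul_eq_mul_integral ((hL4 j).integrable (by norm_num)).aestronglyMeasurable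
      ((hL4 i).integrable (by norm_num)).aestronglyMeasurable
    calc ∫ ω, V j ω * V i ω ∂μ = integral μ (V j * V i) := rfl
    _ = 0 := by rw [this, hmean j, zero_mul]

lemma int_triple (hVmeas : ∀ i, Measurable (V i))
    (hindep : iIndepFun V μ)
    (hL4 : ∀ i, MemLp (V i) 4 μ)
    (hmean : ∀ i, ∫ ω, V i ω ∂μ = 0)
    (hvar : ∀ i, ∫ ω, (V i ω) ^ 2 ∂μ = 1)
    (j k i : Fin d) :
    ∫ ω, V j ω * V k ω * V i ω ^ 2 ∂μ
      = if k = j then (if j = i then ∫ ω, V i ω ^ 4 ∂μ else 1) else 0 := by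
  have hsqL2 : ∀ l, MemLp (fun ω => V l ω ^ 2) 2 μ := by
    intro l
    have := mul_memLp2 (hL4 l) (hL4 l)
    simpa [sq] using this
  have hsqInt : ∀ l, Integrable (fun ω => V l ω ^ 2) μ := fun l =>
    (hsqL2 l).integrable (by norm_num)
  have hcubeInt : ∀ l, Integrable (fun ω => V l ω ^ 3) μ := by
    intro l
    have := mul_int24 (hsqL2 l) (hL4 l)
    have h3 : (fun ω => V l ω ^ 2 * V l ω) = fun ω => V l ω ^ 3 := by
      funext ω; ring
    rwa [h3] at this
  by_cases hkj : k = j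
  · subst hkj
    simp only [if_true]
    by_cases hki : k = i
    · subst hki
      simp only [if_true]
      exact integral_congr_ae (Filter.Eventually.of_forall fun ω => by ring)
    · simp only [hki, if_false]
      have hI : IndepFun (fun ω => V k ω ^ 2) (fun ω => V i ω ^ 2) μ :=
        (hindep.indepFun hki).comp (measurable_id.pow_const 2) (measurable_id.pow_const 2)
      have := hI.integral_mul_eq_mul_integral (hsqInt k).aestronglyMeasurable (hsqInt i).aestronglyMeasurable
      calc ∫ ω, V k ω * V k ω * V i ω ^ 2 ∂μ
          = integral μ ((fun ω => V k ω ^ 2) * (fun ω => V i ω ^ 2)) :=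
            integral_congr_ae (Filter.Eventually.of_forall fun ω => by
              simp only [Pi.mul_apply]; ring)
        _ = 1 := by rw [this, hvar k, hvar i, one_mul]
  · simp only [hkj, if_false]
    by_cases hji : j = i
    · subst hji
      -- k ≠ j = i : integrand = V j ^ 3 * V k
      have hI : IndepFun (fun ω => V j ω ^ 3) (V k) μ :=
        (hindep.indepFun (Ne.symm hkj)).comp (measurable_id.pow_const 3) measurable_id
      have := hI.integral_mul_eq_mul_integral (hcubeInt j).aestronglyMeasurable ((hL4 k).integrable (by norm_num)).aestronglyMeasurable
      calc ∫ ω, V j ω * V k ω * V j ω ^ 2 ∂μ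
          = integral μ ((fun ω => V j ω ^ 3) * V k) :=
            integral_congr_ae (Filter.Eventually.of_forall fun ω => by
              simp only [Pi.mul_apply]; ring)
        _ = 0 := by rw [this, hmean k, mul_zero]
    · by_cases hki : k = i
      · subst hki
        -- j ≠ k = i : integrand = V j * V k ^ 3
        have hI : IndepFun (V j) (fun ω => V k ω ^ 3) μ :=
          (hindep.indepFun (Ne.symm hkj)).comp measurable_id (measurable_id.pow_const 3)
        have := hI.integral_mul_eq_mul_integral ((hL4 j).integrable (by norm_num)).aestronglyMeasurable (hcubeInt k).aestronglyMeasurable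
        calc ∫ ω, V j ω * V k ω * V k ω ^ 2 ∂μ
            = integral μ (V j * (fun ω => V k ω ^ 3)) :=
              integral_congr_ae (Filter.Eventually.of_forall fun ω => by
                simp only [Pi.mul_apply]; ring)
          _ = 0 := by rw [this, hmean j, zero_mul]
      · -- all distinct
        have hP : IndepFun (fun ω => (V k ω, V i ω)) (V j) μ :=
          hindep.indepFun_prodMk hVmeas k i j hkj (fun h => hji h.symm)
        have hI : IndepFun (fun ω => V k ω * V i ω ^ 2) (V j) μ :=
          hP.comp (measurable_fst.mul (measurable_snd.pow_const 2)) measurable_id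
        have hWint : Integrable (fun ω => V k ω * V i ω ^ 2) μ := by
          have := mul_int24 (hsqL2 i) (hL4 k)
          have h3 : (fun ω => V i ω ^ 2 * V k ω) = fun ω => V k ω * V i ω ^ 2 := by
            funext ω; ring
          rwa [h3] at this
        have := hI.symm.integral_mul_eq_mul_integral ((hL4 j).integrable (by norm_num)).aestronglyMeasurable hWint.aestronglyMeasurable
        calc ∫ ω, V j ω * V k ω * V i ω ^ 2 ∂μ
            = integral μ (V j * fun ω => V k ω * V i ω ^ 2) :=
              integral_congr_ae (Filter.Eventually.of_forall fun ω => by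
                simp only [Pi.mul_apply]; ring)
          _ = 0 := by rw [this, hmean j, zero_mul]

lemma one_term (hVmeas : ∀ i, Measurable (V i))
    (hindep : iIndepFun V μ)
    (hL4 : ∀ i, MemLp (V i) 4 μ)
    (hmean : ∀ i, ∫ ω, V i ω ∂μ = 0)
    (hvar : ∀ i, ∫ ω, (V i ω) ^ 2 ∂μ = 1)
    (a : Fin d → ℝ) (i : Fin d) :
    Integrable (fun ω => ((∑ j, a j * V j ω) * V i ω - a i) ^ 2) μ ∧
    ∫ ω, ((∑ j, a j * V j ω) * V i ω - a i) ^ 2 ∂μ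
      = a i ^ 2 * variance (fun ω => V i ω ^ 2) μ + ((∑ j, a j ^ 2) - a i ^ 2) := by
  have hsqL2 : ∀ l, MemLp (fun ω => V l ω ^ 2) 2 μ := by
    intro l
    have := mul_memLp2 (hL4 l) (hL4 l)
    simpa [sq] using this
  -- integrability of the pieces
  have hTint : ∀ j k, Integrable (fun ω => a j * a k * (V j ω * V k ω * V i ω ^ 2)) μ := by
    intro j k
    have h0 : Integrable (fun ω => (V j ω * V k ω) * V i ω ^ 2) μ :=
      mul_int2 (mul_memLp2 (hL4 j) (hL4 k)) (hsqL2 i)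
    exact (h0.const_mul (a j * a k)).congr (Filter.Eventually.of_forall fun ω => by ring)
  have hSint : ∀ j, Integrable (fun ω => (-2 * a i * a j) * (V j ω * V i ω)) μ := by
    intro j
    exact ((mul_int2 ((hL4 j).mono_exponent (by norm_num))
      ((hL4 i).mono_exponent (by norm_num))).const_mul _)
  -- pointwise expansion
  have hpt : (fun ω => ((∑ j, a j * V j ω) * V i ω - a i) ^ 2)
      = fun ω => (∑ j, ∑ k, a j * a k * (V j ω * V k ω * V i ω ^ 2))
          + ((∑ j, (-2 * a i * a j) * (V j ω * V i ω)) + a i ^ 2) := by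
    funext ω
    have hsv : (∑ j, a j * V j ω) * V i ω = ∑ j, a j * V j ω * V i ω := Finset.sum_mul _ _ _
    have h1 : ∑ j, ∑ k, a j * a k * (V j ω * V k ω * V i ω ^ 2)
        = ((∑ j, a j * V j ω) * V i ω) * ((∑ j, a j * V j ω) * V i ω) := by
      rw [hsv, Finset.sum_mul_sum]
      exact Finset.sum_congr rfl fun j _ => Finset.sum_congr rfl fun k _ => by ring
    have h2 : ∑ j, (-2 * a i * a j) * (V j ω * V i ω)
        = -2 * a i * ((∑ j, a j * V j ω) * V i ω) := by
      rw [hsv, Finset.mul_sum]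
      exact Finset.sum_congr rfl fun j _ => by ring
    rw [h1, h2]
    ring
  have hAint : Integrable (fun ω => ∑ j, ∑ k, a j * a k * (V j ω * V k ω * V i ω ^ 2)) μ :=
    integrable_finset_sum _ fun j _ => integrable_finset_sum _ fun k _ => hTint j k
  have hBint : Integrable (fun ω => ∑ j, (-2 * a i * a j) * (V j ω * V i ω)) μ :=
    integrable_finset_sum _ fun j _ => hSint j
  have hGint : Integrable (fun ω => ((∑ j, a j * V j ω) * V i ω - a i) ^ 2) μ := by
    rw [hpt]
    exact hAint.add (hBint.add (integrable_const _))
  refine ⟨hGint, ?_⟩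
  have hvariance : variance (fun ω => V i ω ^ 2) μ = (∫ ω, V i ω ^ 4 ∂μ) - 1 := by
    rw [variance_eq_sub (hsqL2 i)]
    congr 1
    · exact integral_congr_ae (Filter.Eventually.of_forall fun ω => by
        simp only [Pi.pow_apply]; ring)
    · rw [hvar i]; norm_num
  rw [hpt]
  have hBC : Integrable (fun ω => (∑ j, (-2 * a i * a j) * (V j ω * V i ω)) + a i ^ 2) μ :=
    hBint.add (integrable_const _)
  rw [integral_add hAint hBC,
    integral_add hBint (integrable_const _),
    integral_finset_sum _ fun j _ => integrable_finset_sum _ fun k _ => hTint j k,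
    integral_finset_sum _ fun j _ => hSint j]
  simp only [integral_const, probReal_univ, ENNReal.toReal_one, smul_eq_mul, one_mul]
  have hA : ∑ j, ∫ ω, (∑ k, a j * a k * (V j ω * V k ω * V i ω ^ 2)) ∂μ
      = (∑ j, a j ^ 2) + a i ^ 2 * ((∫ ω, V i ω ^ 4 ∂μ) - 1) := by
    have hswap : ∀ j, ∫ ω, (∑ k, a j * a k * (V j ω * V k ω * V i ω ^ 2)) ∂μ
        = ∑ k, ∫ ω, a j * a k * (V j ω * V k ω * V i ω ^ 2) ∂μ := fun j =>
      integral_finset_sum _ fun k _ => hTint j k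
    simp only [hswap]
    have hinner : ∀ j, ∑ k, ∫ ω, a j * a k * (V j ω * V k ω * V i ω ^ 2) ∂μ
        = a j ^ 2 * (if j = i then ∫ ω, V i ω ^ 4 ∂μ else 1) := by
      intro j
      have : ∀ k, ∫ ω, a j * a k * (V j ω * V k ω * V i ω ^ 2) ∂μ
          = if k = j then a j ^ 2 * (if j = i then ∫ ω, V i ω ^ 4 ∂μ else 1) else 0 := by
        intro k
        rw [integral_const_mul _ _, int_triple hVmeas hindep hL4 hmean hvar j k i]
        by_cases hkj : k = j
        · subst hkj; simp only [if_true]; ring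
        · simp [hkj]
      rw [Finset.sum_congr rfl fun k _ => this k]
      simp
    rw [Finset.sum_congr rfl fun j _ => hinner j]
    have : ∀ j : Fin d, a j ^ 2 * (if j = i then ∫ ω, V i ω ^ 4 ∂μ else 1)
        = a j ^ 2 + (if j = i then a i ^ 2 * ((∫ ω, V i ω ^ 4 ∂μ) - 1) else 0) := by
      intro j
      by_cases hji : j = i
      · subst hji; simp only [if_true]; ring
      · simp [hji]
    rw [Finset.sum_congr rfl fun j _ => this j, Finset.sum_add_distrib]
    simp
  have hB : ∑ j, ∫ ω, (-2 * a i * a j) * (V j ω * V i ω) ∂μ = -2 * a i ^ 2 := by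
    have : ∀ j, ∫ ω, (-2 * a i * a j) * (V j ω * V i ω) ∂μ
        = if j = i then -2 * a i ^ 2 else 0 := by
      intro j
      rw [integral_const_mul _ _, int_pair hVmeas hindep hL4 hmean hvar j i]
      by_cases hji : j = i
      · subst hji; simp only [if_true]; ring
      · simp [hji]
    rw [Finset.sum_congr rfl fun j _ => this j]
    simp
  rw [hA, hB, hvariance]
  ring

lemma aux_sum (hVmeas : ∀ i, Measurable (V i))
    (hindep : iIndepFun V μ)
    (hL4 : ∀ i, MemLp (V i) 4 μ)
    (hmean : ∀ i, ∫ ω, V i ω ∂μ = 0)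
    (hvar : ∀ i, ∫ ω, (V i ω) ^ 2 ∂μ = 1)
    (a : Fin d → ℝ) :
    ∫ ω, (∑ i, ((∑ j, a j * V j ω) * V i ω - a i) ^ 2) ∂μ
      = (∑ i, a i ^ 2 * variance (fun ω => V i ω ^ 2) μ) + ((d : ℝ) - 1) * ∑ i, a i ^ 2 := by
  rw [integral_finset_sum _ fun i _ => (one_term hVmeas hindep hL4 hmean hvar a i).1,
    Finset.sum_congr rfl fun i _ => (one_term hVmeas hindep hL4 hmean hvar a i).2,
    Finset.sum_add_distrib, Finset.sum_sub_distrib, Finset.sum_const, Finset.card_univ]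
  simp only [Fintype.card_fin, nsmul_eq_mul]
  ring

lemma rademacher_var {X : Ω → ℝ} (hXm : Measurable X) (hX4 : MemLp X 4 μ)
    (h1 : μ {ω | X ω = 1} = 1/2) (h2 : μ {ω | X ω = -1} = 1/2) :
    variance (fun ω => X ω ^ 2) μ = 0 := by
  have hsqL2 : MemLp (fun ω => X ω ^ 2) 2 μ := by
    have := mul_memLp2 hX4 hX4
    simpa [sq] using this
  have hA : MeasurableSet {ω | X ω = 1} := hXm (measurableSet_singleton 1)
  have hB : MeasurableSet {ω | X ω = -1} := hXm (measurableSet_singleton (-1))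
  have hdisj : Disjoint {ω | X ω = 1} {ω | X ω = -1} := by
    rw [Set.disjoint_left]
    rintro ω (h : X ω = 1) (h' : X ω = -1)
    rw [h] at h'; norm_num at h'
  have hunion : μ ({ω | X ω = 1} ∪ {ω | X ω = -1}) = 1 := by
    rw [measure_union hdisj hB, h1, h2]
    rw [ENNReal.div_add_div_same, one_add_one_eq_two, ENNReal.div_self] <;> norm_num
  have hae : ∀ᵐ ω ∂μ, X ω ^ 2 = 1 := by
    have hcompl : μ ({ω | X ω = 1} ∪ {ω | X ω = -1})ᶜ = 0 := by
      rw [measure_compl (hA.union hB) (measure_ne_top μ _), hunion, measure_univ, tsub_self]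
    rw [ae_iff]
    refine measure_mono_null ?_ hcompl
    intro ω hω
    simp only [Set.mem_setOf_eq] at hω
    simp only [Set.mem_compl_iff, Set.mem_union, Set.mem_setOf_eq, not_or]
    exact ⟨fun h => hω (by rw [h]; norm_num), fun h => hω (by rw [h]; norm_num)⟩
  have hint1 : ∫ ω, X ω ^ 2 ∂μ = 1 := by
    rw [integral_congr_ae hae]; simp
  have hint2 : ∫ ω, (X ω ^ 2) ^ 2 ∂μ = 1 := by
    have : ∀ᵐ ω ∂μ, (X ω ^ 2) ^ 2 = 1 := by
      filter_upwards [hae] with ω h; rw [h]; norm_num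
    rw [integral_congr_ae this]; simp
  rw [variance_eq_sub hsqL2]
  have e1 : (μ : Measure Ω)[(fun ω => X ω ^ 2) ^ 2] = 1 := by
    rw [← hint2]
    exact integral_congr_ae (Filter.Eventually.of_forall fun ω => by simp [Pi.pow_apply])
  have e2 : (μ : Measure Ω)[fun ω => X ω ^ 2] = 1 := hint1
  rw [e1, e2]; norm_num

end main

end CVAux

/-- **General variance formula for the control variate forward gradient and its
minimization.**  If the components of `v` are independent with zero mean and unit
variance, then
`E[‖h_v(θ) − ∇f(θ)‖²] = Σ_i (∂_i f(θ) − ∂_i f̂(θ))² Var[v_i²] + (d−1)‖∇f(θ) − ∇f̂(θ)‖²`.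
In particular this quantity is always at least `(d−1)‖∇f(θ) − ∇f̂(θ)‖²` (it is minimized
exactly when `Var[v_i²] = 0` for every `i`), and the minimum is attained when the `v_i`
are independent Rademacher variables. -/
theorem cv_forward_gradient_mse_general
    {Ω : Type*} [MeasurableSpace Ω] {μ : Measure Ω} [IsProbabilityMeasure μ]
    {d : ℕ} (f fhat : EuclideanSpace ℝ (Fin d) → ℝ) (θ : EuclideanSpace ℝ (Fin d))
    (hf : DifferentiableAt ℝ f θ) (hfhat : DifferentiableAt ℝ fhat θ)
    (v : Ω → EuclideanSpace ℝ (Fin d)) (hmeas : Measurable v)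
    (hindep : iIndepFun (fun i ω => v ω i) μ)
    (hL4 : ∀ i, MemLp (fun ω => v ω i) 4 μ)
    (hmean : ∀ i, ∫ ω, v ω i ∂μ = 0)
    (hvar : ∀ i, ∫ ω, (v ω i) ^ 2 ∂μ = 1) :
    (∫ ω, ‖(⟪gradient f θ, v ω⟫ • v ω - ⟪gradient fhat θ, v ω⟫ • v ω + gradient fhat θ)
          - gradient f θ‖ ^ 2 ∂μ
        = (∑ i, (gradient f θ i - gradient fhat θ i) ^ 2 * variance (fun ω => (v ω i) ^ 2) μ)
          + ((d : ℝ) - 1) * ‖gradient f θ - gradient fhat θ‖ ^ 2)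
    ∧ (((d : ℝ) - 1) * ‖gradient f θ - gradient fhat θ‖ ^ 2
        ≤ ∫ ω, ‖(⟪gradient f θ, v ω⟫ • v ω - ⟪gradient fhat θ, v ω⟫ • v ω + gradient fhat θ)
              - gradient f θ‖ ^ 2 ∂μ)
    ∧ ((∀ i, μ {ω | v ω i = 1} = 1/2 ∧ μ {ω | v ω i = -1} = 1/2) →
        (∀ i, variance (fun ω => (v ω i) ^ 2) μ = 0) ∧
        ∫ ω, ‖(⟪gradient f θ, v ω⟫ • v ω - ⟪gradient fhat θ, v ω⟫ • v ω + gradient fhat θ)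
              - gradient f θ‖ ^ 2 ∂μ
          = ((d : ℝ) - 1) * ‖gradient f θ - gradient fhat θ‖ ^ 2) := by
  set gf := gradient f θ with hgf
  set gfh := gradient fhat θ with hgfh
  set a : Fin d → ℝ := fun i => gf i - gfh i with ha
  have hVmeas : ∀ i : Fin d, Measurable (fun ω => v ω i) := fun i =>
    (measurable_pi_apply i).comp (Measurable.comp (WithLp.measurable_ofLp 2 (Fin d → ℝ)) hmeas)
  -- norm of the difference of gradients
  have hnorm_a : ‖gf - gfh‖ ^ 2 = ∑ i, a i ^ 2 := by
    rw [EuclideanSpace.norm_eq, Real.sq_sqrt (by positivity)]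
    exact Finset.sum_congr rfl fun i _ => by
      simp [PiLp.sub_apply, Real.norm_eq_abs, sq_abs, ha]
  -- pointwise identification of the integrand
  have hint_eq : ∀ ω, ‖(⟪gf, v ω⟫ • v ω - ⟪gfh, v ω⟫ • v ω + gfh) - gf‖ ^ 2
      = ∑ i, ((∑ j, a j * v ω j) * v ω i - a i) ^ 2 := by
    intro ω
    rw [EuclideanSpace.norm_eq, Real.sq_sqrt (by positivity)]
    refine Finset.sum_congr rfl fun i _ => ?_
    rw [Real.norm_eq_abs, sq_abs]
    congr 1
    have h1 : ((⟪gf, v ω⟫ • v ω - ⟪gfh, v ω⟫ • v ω + gfh) - gf) i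
        = ⟪gf, v ω⟫ * v ω i - ⟪gfh, v ω⟫ * v ω i + gfh i - gf i := by
      simp [PiLp.sub_apply, PiLp.add_apply, PiLp.smul_apply, smul_eq_mul]
    rw [h1]
    have h2 : ⟪gf, v ω⟫ = ∑ j, gf j * v ω j := by
      simp [PiLp.inner_apply, RCLike.inner_apply, conj_trivial, mul_comm]
    have h3 : ⟪gfh, v ω⟫ = ∑ j, gfh j * v ω j := by
      simp [PiLp.inner_apply, RCLike.inner_apply, conj_trivial, mul_comm]
    have h4 : (∑ j, a j * v ω j) = (∑ j, gf j * v ω j) - (∑ j, gfh j * v ω j) := by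
      rw [← Finset.sum_sub_distrib]
      exact Finset.sum_congr rfl fun j _ => by rw [ha]; ring
    rw [h2, h3, h4, ha]
    ring
  have key := aux_sum (V := fun i ω => v ω i) hVmeas hindep hL4 hmean hvar a
  have part1 : ∫ ω, ‖(⟪gf, v ω⟫ • v ω - ⟪gfh, v ω⟫ • v ω + gfh) - gf‖ ^ 2 ∂μ
      = (∑ i, (gf i - gfh i) ^ 2 * variance (fun ω => (v ω i) ^ 2) μ)
        + ((d : ℝ) - 1) * ‖gf - gfh‖ ^ 2 := by
    rw [integral_congr_ae (Filter.Eventually.of_forall hint_eq), key, hnorm_a]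
  refine ⟨part1, ?_, ?_⟩
  · rw [part1]
    have h0 : 0 ≤ ∑ i, (gf i - gfh i) ^ 2 * variance (fun ω => (v ω i) ^ 2) μ :=
      Finset.sum_nonneg fun i _ => mul_nonneg (sq_nonneg _) (variance_nonneg _ _)
    linarith
  · intro h
    have hv0 : ∀ i, variance (fun ω => (v ω i) ^ 2) μ = 0 := fun i =>
      rademacher_var (hVmeas i) (hL4 i) (h i).1 (h i).2
    refine ⟨hv0, ?_⟩
    rw [part1]
    simp [hv0]
end

section
/- Let f : ℝ^d → ℝ be differentiable at θ and let v be a random vector in ℝ^d whose scalar components v_i are independent with zero mean and unit variance. Then the second moment of the i-th component of the forward gradient g_v(θ) = (∇f(θ)·v)v satisfies E[(g_v(θ))_i²] = (∂f/∂θ_i(θ))² · Var[v_i²] + ‖∇f(θ)‖² for each i = 1, ..., d. -/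
open MeasureTheory ProbabilityTheory
open scoped RealInnerProductSpace


private lemma enn_helper {p q r : ENNReal} (hp : p ≠ 0) (hq : q ≠ 0) (hr : r ≠ 0)
    (h : p.toReal⁻¹ = q.toReal⁻¹ + r.toReal⁻¹) (hq' : q ≠ ⊤) (hr' : r ≠ ⊤) :
    1/p = 1/q + 1/r := by
  simp only [one_div]
  refine (ENNReal.toReal_eq_toReal_iff' (by simp [hp]) (by simp [ENNReal.add_ne_top, hq, hr])).mp ?_
  rw [ENNReal.toReal_add (by simp [hq]) (by simp [hr])]
  simp only [ENNReal.toReal_inv]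
  exact h

private lemma mul_mem_L2 {Ω : Type*} [MeasurableSpace Ω] {μ : Measure Ω}
    {A B : Ω → ℝ} (hA : MemLp A 4 μ) (hB : MemLp B 4 μ) :
    MemLp (fun ω => A ω * B ω) 2 μ := by
  have := MemLp.smul (E := ℝ) (𝕜 := ℝ) (p := 4) (q := 4) (r := 2) hB hA
    (hpqr := ⟨by simpa only [one_div] using (enn_helper (p := 2) (q := 4) (r := 4) (by norm_num) (by norm_num) (by norm_num) (by norm_num) (by norm_num) (by norm_num)).symm⟩)
  exact this

private lemma L2_mul_integrable {Ω : Type*} [MeasurableSpace Ω] {μ : Measure Ω} [IsFiniteMeasure μ]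
    {A B : Ω → ℝ} (hA : MemLp A 2 μ) (hB : MemLp B 2 μ) :
    Integrable (fun ω => A ω * B ω) μ := by
  have := MemLp.smul (E := ℝ) (𝕜 := ℝ) (p := 2) (q := 2) (r := 1) hB hA
    (hpqr := ⟨by simpa only [one_div] using (enn_helper (p := 1) (q := 2) (r := 2) (by norm_num) (by norm_num) (by norm_num) (by norm_num) (by norm_num) (by norm_num)).symm⟩)
  have h1 : MemLp (fun ω => A ω * B ω) 1 μ := by exact this
  exact h1.integrable le_rfl

/-- **Second moment of a component of the forward gradient.**
If the components of `v` are independent with zero mean and unit variance, then for each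
`i`, `E[(g_v(θ))_i²] = (∂f/∂θ_i(θ))² Var[v_i²] + ‖∇f(θ)‖²`, where
`(g_v(θ))_i = (∇f(θ)·v) v_i`. -/
theorem forward_gradient_component_second_moment
    {Ω : Type*} [MeasurableSpace Ω] {μ : Measure Ω} [IsProbabilityMeasure μ]
    {d : ℕ} (f : EuclideanSpace ℝ (Fin d) → ℝ) (θ : EuclideanSpace ℝ (Fin d))
    (hf : DifferentiableAt ℝ f θ)
    (v : Ω → EuclideanSpace ℝ (Fin d)) (hmeas : Measurable v)
    (hindep : iIndepFun (fun i ω => v ω i) μ)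
    (hL4 : ∀ i, MemLp (fun ω => v ω i) 4 μ)
    (hmean : ∀ i, ∫ ω, v ω i ∂μ = 0)
    (hvar : ∀ i, ∫ ω, (v ω i) ^ 2 ∂μ = 1) :
    ∀ i : Fin d,
      ∫ ω, (⟪gradient f θ, v ω⟫ * v ω i) ^ 2 ∂μ
        = (gradient f θ i) ^ 2 * variance (fun ω => (v ω i) ^ 2) μ
          + ‖gradient f θ‖ ^ 2 := by
  intro i
  set g : EuclideanSpace ℝ (Fin d) := gradient f θ with hg
  have measX : ∀ j : Fin d, Measurable (fun ω => v ω j) :=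
    fun j => (measurable_pi_apply j).comp ((WithLp.measurable_ofLp 2 _).comp hmeas)
  -- integrability of 4-fold products
  have hterm : ∀ j k : Fin d, Integrable (fun ω => v ω j * v ω k * v ω i ^ 2) μ := by
    intro j k
    have h := L2_mul_integrable (μ := μ) (mul_mem_L2 (hL4 j) (hL4 k)) (mul_mem_L2 (hL4 i) (hL4 i))
    have e : (fun ω => v ω j * v ω k * v ω i ^ 2)
        = fun ω => (v ω j * v ω k) * (v ω i * v ω i) := by funext ω; ring
    rw [e]; exact h
  -- the mixed moments
  set M4 : ℝ := ∫ ω, v ω i * v ω i * v ω i ^ 2 ∂μ with hM4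
  have hmom : ∀ j k : Fin d, ∫ ω, v ω j * v ω k * v ω i ^ 2 ∂μ
      = if j = k then (if j = i then M4 else 1) else 0 := by
    intro j k
    by_cases hjk : j = k
    · subst hjk
      by_cases hji : j = i
      · subst hji; simp [hM4]
      · -- E[vj² vi²] = 1
        rw [if_pos rfl, if_neg hji]
        have hind : IndepFun (fun ω => v ω j ^ 2) (fun ω => v ω i ^ 2) μ :=
          (hindep.indepFun hji).comp (measurable_id.pow_const 2) (measurable_id.pow_const 2)
        have e : (fun ω => v ω j * v ω j * v ω i ^ 2)
            = (fun ω => v ω j ^ 2) * (fun ω => v ω i ^ 2) := by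
          funext ω; simp only [Pi.mul_apply]; ring
        calc ∫ ω, v ω j * v ω j * v ω i ^ 2 ∂μ
            = ∫ ω, ((fun ω => v ω j ^ 2) * (fun ω => v ω i ^ 2)) ω ∂μ := by rw [e]
          _ = (∫ ω, v ω j ^ 2 ∂μ) * ∫ ω, v ω i ^ 2 ∂μ :=
              hind.integral_mul_eq_mul_integral ((measX j).pow_const 2).aestronglyMeasurable
                ((measX i).pow_const 2).aestronglyMeasurable
          _ = 1 := by rw [hvar j, hvar i, one_mul]
    · rw [if_neg hjk]
      by_cases hji : j = i
      · -- j = i, k ≠ i : E[vi³ vk] = E[vi³] E[vk] = 0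
        subst hji
        have hki : k ≠ j := fun h => hjk h.symm
        have hind : IndepFun (fun ω => v ω j ^ 3) (fun ω => v ω k) μ :=
          (hindep.indepFun hjk).comp (measurable_id.pow_const 3) measurable_id
        have e : (fun ω => v ω j * v ω k * v ω j ^ 2)
            = (fun ω => v ω j ^ 3) * (fun ω => v ω k) := by
          funext ω; simp only [Pi.mul_apply]; ring
        calc ∫ ω, v ω j * v ω k * v ω j ^ 2 ∂μ
            = ∫ ω, ((fun ω => v ω j ^ 3) * (fun ω => v ω k)) ω ∂μ := by rw [e]
          _ = (∫ ω, v ω j ^ 3 ∂μ) * ∫ ω, v ω k ∂μ :=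
              hind.integral_mul_eq_mul_integral ((measX j).pow_const 3).aestronglyMeasurable
                (measX k).aestronglyMeasurable
          _ = 0 := by rw [hmean k, mul_zero]
      · by_cases hki : k = i
        · subst hki
          have hind : IndepFun (fun ω => v ω k ^ 3) (fun ω => v ω j) μ :=
            (hindep.indepFun (fun h => hjk h.symm : k ≠ j)).comp
              (measurable_id.pow_const 3) measurable_id
          have e : (fun ω => v ω j * v ω k * v ω k ^ 2)
              = (fun ω => v ω k ^ 3) * (fun ω => v ω j) := by
            funext ω; simp only [Pi.mul_apply]; ring
          calc ∫ ω, v ω j * v ω k * v ω k ^ 2 ∂μ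
              = ∫ ω, ((fun ω => v ω k ^ 3) * (fun ω => v ω j)) ω ∂μ := by rw [e]
            _ = (∫ ω, v ω k ^ 3 ∂μ) * ∫ ω, v ω j ∂μ :=
                hind.integral_mul_eq_mul_integral ((measX k).pow_const 3).aestronglyMeasurable
                  (measX j).aestronglyMeasurable
            _ = 0 := by rw [hmean j, mul_zero]
        · -- j, k, i all distinct
          have hpair : IndepFun (fun ω => (v ω k, v ω i)) (fun ω => v ω j) μ :=
            hindep.indepFun_prodMk measX k i j (fun h => hjk h.symm) (fun h => hji h.symm)
          have hind : IndepFun (fun ω => v ω k * v ω i ^ 2) (fun ω => v ω j) μ :=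
            hpair.comp (measurable_fst.mul (measurable_snd.pow_const 2)) measurable_id
          have e : (fun ω => v ω j * v ω k * v ω i ^ 2)
              = (fun ω => v ω k * v ω i ^ 2) * (fun ω => v ω j) := by
            funext ω; simp only [Pi.mul_apply]; ring
          calc ∫ ω, v ω j * v ω k * v ω i ^ 2 ∂μ
              = ∫ ω, ((fun ω => v ω k * v ω i ^ 2) * (fun ω => v ω j)) ω ∂μ := by rw [e]
            _ = (∫ ω, v ω k * v ω i ^ 2 ∂μ) * ∫ ω, v ω j ∂μ :=
                hind.integral_mul_eq_mul_integral
                  ((measX k).mul ((measX i).pow_const 2)).aestronglyMeasurable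
                  (measX j).aestronglyMeasurable
            _ = 0 := by rw [hmean j, mul_zero]
  -- expand the square
  have expand : (fun ω => (⟪g, v ω⟫ * v ω i) ^ 2)
      = fun ω => ∑ j, ∑ k, (g j * g k) * (v ω j * v ω k * v ω i ^ 2) := by
    funext ω
    have hin : ⟪g, v ω⟫ = ∑ j, g j * v ω j := by
      simp [PiLp.inner_apply, RCLike.inner_apply]
      exact Finset.sum_congr rfl fun _ _ => mul_comm _ _
    rw [hin, mul_pow, sq (∑ j, g j * v ω j), Finset.sum_mul_sum, Finset.sum_mul]
    refine Finset.sum_congr rfl fun j _ => ?_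
    rw [Finset.sum_mul]
    exact Finset.sum_congr rfl fun k _ => by ring
  rw [expand, integral_finset_sum _
      (fun j _ => integrable_finset_sum _ fun k _ => (hterm j k).const_mul _)]
  have step : ∀ j : Fin d, ∫ ω, ∑ k, (g j * g k) * (v ω j * v ω k * v ω i ^ 2) ∂μ
      = ∑ k, (g j * g k) * ∫ ω, v ω j * v ω k * v ω i ^ 2 ∂μ := by
    intro j
    rw [integral_finset_sum _ (fun k _ => (hterm j k).const_mul _)]
    exact Finset.sum_congr rfl fun k _ => integral_const_mul _ _
  simp_rw [step, hmom]
  -- evaluate the double sum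
  have inner_sum : ∀ j : Fin d,
      (∑ k, (g j * g k) * (if j = k then (if j = i then M4 else 1) else 0))
        = g j ^ 2 * (if j = i then M4 else 1) := by
    intro j
    rw [Finset.sum_eq_single j]
    · rw [if_pos rfl]; ring
    · intro k _ hkj; rw [if_neg (fun h => hkj h.symm), mul_zero]
    · intro h; exact absurd (Finset.mem_univ j) h
  rw [Finset.sum_congr rfl fun j _ => inner_sum j]
  have split : ∀ j ∈ Finset.univ, g j ^ 2 * (if j = i then M4 else 1)
      = (if j = i then g i ^ 2 * (M4 - 1) else 0) + g j ^ 2 := by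
    intro j _
    by_cases h : j = i
    · subst h; rw [if_pos rfl, if_pos rfl]; ring
    · rw [if_neg h, if_neg h]; ring
  rw [Finset.sum_congr rfl split, Finset.sum_add_distrib, Finset.sum_ite_eq' Finset.univ i,
    if_pos (Finset.mem_univ i)]
  -- variance and norm
  have hsq2 : MemLp (fun ω => v ω i ^ 2) 2 μ := by
    have := mul_mem_L2 (hL4 i) (hL4 i)
    have e : (fun ω => v ω i * v ω i) = fun ω => v ω i ^ 2 := by funext ω; ring
    rwa [e] at this
  have hvariance : variance (fun ω => v ω i ^ 2) μ = M4 - 1 := by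
    rw [variance_eq_sub hsq2]
    have h2 : (fun ω => v ω i ^ 2) ^ 2 = fun ω => v ω i * v ω i * v ω i ^ 2 := by
      funext ω; simp only [Pi.pow_apply]; ring
    have h3 : μ[(fun ω => v ω i ^ 2) ^ 2] = M4 := by rw [h2]
    have h4 : μ[fun ω => v ω i ^ 2] = 1 := hvar i
    rw [h3, h4]; norm_num
  have hnorm : ‖g‖ ^ 2 = ∑ j, g j ^ 2 := by
    rw [← real_inner_self_eq_norm_sq]
    simp only [PiLp.inner_apply, RCLike.inner_apply, conj_trivial, pow_two]
  rw [hvariance, hnorm]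
end

section
/- Let f, f̂ : ℝ^d → ℝ be differentiable at θ and let v be a random vector in ℝ^d whose scalar components v_i are independent with zero mean and unit variance. Then the second moment of the i-th component of the control variate forward gradient satisfies E[(h_v(θ))_i²] = (∂f/∂θ_i(θ) − ∂f̂/∂θ_i(θ))² · Var[v_i²] + ‖∇f(θ) − ∇f̂(θ)‖² + 2 (∂f/∂θ_i(θ))(∂f̂/∂θ_i(θ)) − (∂f̂/∂θ_i(θ))² for each i = 1, ..., d. -/
open MeasureTheory ProbabilityTheory
open scoped RealInnerProductSpace
open scoped ENNReal

/-- **Second moment of a component of the control variate forward gradient.**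
If the components of `v` are independent with zero mean and unit variance, then for each
`i`, `E[(h_v(θ))_i²] = (∂_i f(θ) − ∂_i f̂(θ))² Var[v_i²] + ‖∇f(θ) − ∇f̂(θ)‖²
+ 2 ∂_i f(θ) ∂_i f̂(θ) − (∂_i f̂(θ))²`, where
`(h_v(θ))_i = (∇f(θ)·v) v_i − (∇f̂(θ)·v) v_i + ∂_i f̂(θ)`. -/
theorem cv_forward_gradient_component_second_moment
    {Ω : Type*} [MeasurableSpace Ω] {μ : Measure Ω} [IsProbabilityMeasure μ]
    {d : ℕ} (f fhat : EuclideanSpace ℝ (Fin d) → ℝ) (θ : EuclideanSpace ℝ (Fin d))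
    (hf : DifferentiableAt ℝ f θ) (hfhat : DifferentiableAt ℝ fhat θ)
    (v : Ω → EuclideanSpace ℝ (Fin d)) (hmeas : Measurable v)
    (hindep : iIndepFun (fun i ω => v ω i) μ)
    (hL4 : ∀ i, MemLp (fun ω => v ω i) 4 μ)
    (hmean : ∀ i, ∫ ω, v ω i ∂μ = 0)
    (hvar : ∀ i, ∫ ω, (v ω i) ^ 2 ∂μ = 1) :
    ∀ i : Fin d,
      ∫ ω, (⟪gradient f θ, v ω⟫ * v ω i - ⟪gradient fhat θ, v ω⟫ * v ω i
            + gradient fhat θ i) ^ 2 ∂μ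
        = (gradient f θ i - gradient fhat θ i) ^ 2 * variance (fun ω => (v ω i) ^ 2) μ
          + ‖gradient f θ - gradient fhat θ‖ ^ 2
          + 2 * (gradient f θ i) * (gradient fhat θ i)
          - (gradient fhat θ i) ^ 2 := by
  classical
  intro i
  set A := gradient f θ with hA
  set B := gradient fhat θ with hB
  set a : Fin d → ℝ := fun j => A j - B j with ha
  -- measurability of components
  have hm : ∀ j, Measurable (fun ω => v ω j) := fun j => (measurable_pi_apply j).comp ((WithLp.measurable_ofLp 2 _).comp hmeas)
  -- ENNReal exponent arithmetic
  have eq2 : (2:ℝ≥0∞)⁻¹ = 4⁻¹ + 4⁻¹ := by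
    apply (ENNReal.toReal_eq_toReal_iff' (by norm_num) (by norm_num)).mp
    rw [ENNReal.toReal_add (by norm_num) (by norm_num)]
    simp [ENNReal.toReal_inv]
    norm_num
  have eq3 : (1:ℝ≥0∞)/(4/3) = 1/4 + 1/2 := by
    apply (ENNReal.toReal_eq_toReal_iff' (by norm_num) (by norm_num)).mp
    rw [ENNReal.toReal_add (by norm_num) (by norm_num)]
    simp [ENNReal.toReal_div]
    norm_num
  have eq4 : (1:ℝ≥0∞)/1 = 1/4 + 1/(4/3) := by
    apply (ENNReal.toReal_eq_toReal_iff' (by norm_num) (by norm_num)).mp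
    rw [ENNReal.toReal_add (by norm_num) (by norm_num)]
    simp [ENNReal.toReal_div]
    norm_num
  -- integrability
  have h2 : ∀ j k, MemLp (fun ω => v ω j * v ω k) 2 μ := fun j k =>
    (hL4 k).smul (hL4 j) (hpqr := ⟨by simpa [one_div] using eq2.symm⟩)
  have hMem3 : ∀ b c, MemLp (fun ω => v ω b * (v ω c * v ω c)) (4/3) μ := fun b c =>
    (h2 c c).smul (hL4 b) (hpqr := ⟨by simpa [one_div] using eq3.symm⟩)
  have hInt1 : ∀ j, Integrable (fun ω => v ω j) μ := fun j => (hL4 j).integrable (by norm_num)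
  have hInt2 : ∀ j k, Integrable (fun ω => v ω j * v ω k) μ := fun j k =>
    (h2 j k).integrable (by norm_num)
  have hInt3 : ∀ b c, Integrable (fun ω => v ω b * (v ω c * v ω c)) μ := fun b c =>
    (hMem3 b c).integrable (by
      rw [ENNReal.le_div_iff_mul_le (by norm_num) (by norm_num)]
      norm_num)
  have hInt4 : ∀ j k, Integrable (fun ω => v ω j * (v ω k * (v ω i * v ω i))) μ := fun j k =>
    memLp_one_iff_integrable.mp ((hMem3 k i).smul (hL4 j) (hpqr := ⟨by simpa [one_div] using eq4.symm⟩))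
  -- basic moments
  have hvv : ∀ b, ∫ ω, v ω b * v ω b ∂μ = 1 := fun b => by
    simpa [pow_two] using hvar b
  -- expectation of products of distinct components
  have Epair : ∀ j k : Fin d, j ≠ k → ∫ ω, v ω j * v ω k ∂μ = 0 := by
    intro j k hjk
    have h := (hindep.indepFun hjk).integral_mul_eq_mul_integral (hInt1 j).aestronglyMeasurable (hInt1 k).aestronglyMeasurable
    simpa [Pi.mul_apply, hmean j, hmean k] using h
  have Esq : ∀ b c : Fin d, b ≠ c → ∫ ω, (v ω b * v ω b) * (v ω c * v ω c) ∂μ = 1 := by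
    intro b c hbc
    have hφ : Measurable (fun x : ℝ => x * x) := measurable_id.mul measurable_id
    have hind := (hindep.indepFun hbc).comp hφ hφ
    have h := hind.integral_mul_eq_mul_integral (hInt2 b b).aestronglyMeasurable (hInt2 c c).aestronglyMeasurable
    simpa [Pi.mul_apply, Function.comp_def, hvv b, hvv c] using h
  have hzero : ∀ b c e : Fin d, b ≠ c → b ≠ e →
      ∫ ω, v ω b * (v ω c * (v ω e * v ω e)) ∂μ = 0 := by
    intro b c e hbc hbe
    have hpair := hindep.indepFun_prodMk hm c e b hbc.symm hbe.symm
    have hφ : Measurable (fun p : ℝ × ℝ => p.1 * (p.2 * p.2)) := by fun_prop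
    have hind := (hpair.comp hφ measurable_id).symm
    have h := hind.integral_mul_eq_mul_integral (hInt1 b).aestronglyMeasurable (hInt3 c e).aestronglyMeasurable
    simpa [Pi.mul_apply, Function.comp_def, hmean b] using h
  -- fourth moment
  set M : ℝ := ∫ ω, v ω i * (v ω i * (v ω i * v ω i)) ∂μ with hM
  -- variance of v_i^2
  have hVar : variance (fun ω => (v ω i)^2) μ = M - 1 := by
    have hmem : MemLp (fun ω => (v ω i)^2) 2 μ :=
      (h2 i i).ae_eq (Filter.Eventually.of_forall fun ω => by ring)
    rw [variance_eq_sub hmem]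
    have h1 : (∫ ω, ((fun ω => (v ω i)^2)^2) ω ∂μ) = M := by
      rw [hM]
      exact integral_congr_ae (Filter.Eventually.of_forall fun ω => by simp [Pi.pow_apply]; ring)
    simp only [Pi.pow_apply] at h1 ⊢
    rw [show (∫ ω, ((v ω i)^2)^2 ∂μ) = M from h1, hvar i]
    norm_num
  -- expectation of the generic four-fold product
  have ET : ∀ j k : Fin d, ∫ ω, v ω j * (v ω k * (v ω i * v ω i)) ∂μ
      = if j = k then (if j = i then M else 1) else 0 := by
    intro j k
    by_cases hjk : j = k
    · subst hjk
      by_cases hji : j = i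
      · subst hji; simp [hM]
      · have hre : (fun ω => v ω j * (v ω j * (v ω i * v ω i)))
            = fun ω => (v ω j * v ω j) * (v ω i * v ω i) := by funext ω; ring
        rw [hre, Esq j i hji]
        simp [hji]
    · by_cases hji : j = i
      · subst hji
        have hkj : k ≠ j := fun h => hjk h.symm
        have hre : (fun ω => v ω j * (v ω k * (v ω j * v ω j)))
            = fun ω => v ω k * (v ω j * (v ω j * v ω j)) := by funext ω; ring
        rw [hre, hzero k j j hkj hkj]
        simp [hjk]
      · rw [hzero j k i hjk hji]
        simp [hjk]
  -- value of the linear part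
  have hSrw : (fun ω => (∑ j, a j * v ω j) * v ω i)
      = fun ω => ∑ j, a j * (v ω j * v ω i) := by
    funext ω
    rw [Finset.sum_mul]
    exact Finset.sum_congr rfl fun j _ => by ring
  have hSint : Integrable (fun ω => (∑ j, a j * v ω j) * v ω i) μ := by
    rw [hSrw]
    exact integrable_finset_sum _ fun j _ => (hInt2 j i).const_mul _
  have hSval : ∫ ω, (∑ j, a j * v ω j) * v ω i ∂μ = a i := by
    rw [hSrw, integral_finset_sum _ fun j _ => (hInt2 j i).const_mul _]
    have : ∀ j : Fin d, ∫ ω, a j * (v ω j * v ω i) ∂μ = if j = i then a j else 0 := by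
      intro j
      rw [integral_const_mul _ _]
      by_cases h : j = i
      · subst h; rw [hvv j]; simp
      · rw [Epair j i h]; simp [h]
    rw [Finset.sum_congr rfl fun j _ => this j]
    simp
  -- value of the quadratic part
  have expand : (fun ω => ((∑ j, a j * v ω j) * v ω i)^2)
      = fun ω => ∑ j, ∑ k, a j * a k * (v ω j * (v ω k * (v ω i * v ω i))) := by
    funext ω
    rw [mul_pow, pow_two, Finset.sum_mul_sum, Finset.sum_mul]
    refine Finset.sum_congr rfl fun j _ => ?_
    rw [Finset.sum_mul]
    refine Finset.sum_congr rfl fun k _ => ?_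
    ring
  have hS2int : Integrable (fun ω => ((∑ j, a j * v ω j) * v ω i)^2) μ := by
    rw [expand]
    exact integrable_finset_sum _ fun j _ =>
      integrable_finset_sum _ fun k _ => (hInt4 j k).const_mul _
  have hS2val : ∫ ω, ((∑ j, a j * v ω j) * v ω i)^2 ∂μ
      = (∑ j, a j * a j) + a i * a i * (M - 1) := by
    rw [expand, integral_finset_sum _ fun j _ =>
      integrable_finset_sum _ fun k _ => (hInt4 j k).const_mul _]
    have step1 : ∀ j : Fin d,
        ∫ ω, (∑ k, a j * a k * (v ω j * (v ω k * (v ω i * v ω i)))) ∂μ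
          = a j * a j * (if j = i then M else 1) := by
      intro j
      rw [integral_finset_sum _ fun k _ => (hInt4 j k).const_mul _]
      have : ∀ k : Fin d, ∫ ω, a j * a k * (v ω j * (v ω k * (v ω i * v ω i))) ∂μ
          = if j = k then a j * a k * (if j = i then M else 1) else 0 := by
        intro k
        rw [integral_const_mul _ _, ET j k]
        by_cases h : j = k <;> simp [h]
      rw [Finset.sum_congr rfl fun k _ => this k]
      simp
    rw [Finset.sum_congr rfl fun j _ => step1 j]
    have : ∀ j : Fin d, a j * a j * (if j = i then M else 1)
        = a j * a j + (if j = i then a j * a j * (M - 1) else 0) := by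
      intro j
      by_cases h : j = i <;> simp [h] <;> ring
    rw [Finset.sum_congr rfl fun j _ => this j, Finset.sum_add_distrib]
    simp
  -- rewrite the integrand
  have hinner : ∀ (x : EuclideanSpace ℝ (Fin d)) (ω : Ω), ⟪x, v ω⟫ = ∑ j, x j * v ω j :=
    fun x ω => by simp [PiLp.inner_apply, RCLike.inner_apply, conj_trivial]; exact Finset.sum_congr rfl fun j _ => mul_comm _ _
  have key : ∀ ω, (⟪A, v ω⟫ * v ω i - ⟪B, v ω⟫ * v ω i + B i)^2
      = ((∑ j, a j * v ω j) * v ω i)^2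
        + (2 * B i * ((∑ j, a j * v ω j) * v ω i) + (B i)^2) := by
    intro ω
    have hsum : ∑ j, a j * v ω j = (∑ j, A j * v ω j) - ∑ j, B j * v ω j := by
      rw [← Finset.sum_sub_distrib]
      exact Finset.sum_congr rfl fun j _ => by simp [ha]; ring
    rw [hinner A, hinner B, hsum]
    ring
  -- norm identity
  have hnorm : ‖A - B‖^2 = ∑ j, a j * a j := by
    rw [EuclideanSpace.norm_eq, Real.sq_sqrt (by positivity)]
    exact Finset.sum_congr rfl fun j _ => by
      simp [ha, PiLp.sub_apply, sq_abs]
      ring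
  -- put everything together
  calc ∫ ω, (⟪A, v ω⟫ * v ω i - ⟪B, v ω⟫ * v ω i + B i)^2 ∂μ
      = ∫ ω, (((∑ j, a j * v ω j) * v ω i)^2
          + (2 * B i * ((∑ j, a j * v ω j) * v ω i) + (B i)^2)) ∂μ :=
        integral_congr_ae (Filter.Eventually.of_forall fun ω => key ω)
    _ = (∫ ω, ((∑ j, a j * v ω j) * v ω i)^2 ∂μ)
          + ((∫ ω, 2 * B i * ((∑ j, a j * v ω j) * v ω i) ∂μ) + ∫ ω, ((B i)^2 : ℝ) ∂μ) := by
        have h2a : Integrable (fun ω => 2 * B i * ((∑ j, a j * v ω j) * v ω i)) μ :=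
          hSint.const_mul _
        have hrest : Integrable
            (fun ω => 2 * B i * ((∑ j, a j * v ω j) * v ω i) + (B i)^2) μ :=
          h2a.add (integrable_const _)
        rw [integral_add hS2int hrest, integral_add h2a (integrable_const _)]
    _ = ((∑ j, a j * a j) + a i * a i * (M - 1)) + (2 * B i * a i + (B i)^2) := by
        rw [hS2val, integral_const_mul _ _, hSval, integral_const]
        simp
    _ = (A i - B i) ^ 2 * variance (fun ω => (v ω i) ^ 2) μ + ‖A - B‖ ^ 2
          + 2 * A i * B i - (B i)^2 := by
        rw [hVar, hnorm]
        simp only [ha]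
        ring
end

section
/- Let f : ℝ^d → ℝ be μ-strongly convex and L-smooth with global minimizer θ*, let α ∈ (0, 1/(Ld)], let (v_k) be i.i.d. random vectors in ℝ^d with independent Rademacher components, and define the stochastic sequence θ_{k+1} = θ_k − α (∇f(θ_k)·v_k) v_k from a deterministic initial point θ_0. Then for all k ∈ ℕ, E[f(θ_k) − f(θ*)] ≤ (1 − αμ)^k (f(θ_0) − f(θ*)), where the expectation is over all the randomness of the vectors v_0, ..., v_{k−1}. -/
open MeasureTheory ProbabilityTheory
open scoped RealInnerProductSpace

section FGDAux

variable {F : Type*} [NormedAddCommGroup F] [InnerProductSpace ℝ F] [CompleteSpace F]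

lemma fgd_grad_cont {f : F → ℝ} {L : ℝ}
    (hlip : ∀ x y, ‖gradient f x - gradient f y‖ ≤ L * ‖x - y‖) :
    Continuous (gradient f) := by
  have h : LipschitzWith (Real.toNNReal L) (gradient f) := by
    apply LipschitzWith.of_dist_le_mul
    intro x y
    rw [dist_eq_norm, dist_eq_norm]
    calc ‖gradient f x - gradient f y‖ ≤ L * ‖x - y‖ := hlip x y
      _ ≤ Real.toNNReal L * ‖x - y‖ := by
          gcongr; exact Real.le_coe_toNNReal L
  exact h.continuous

lemma fgd_descent {f : F → ℝ} {L : ℝ} (hf : Differentiable ℝ f)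
    (hlip : ∀ x y, ‖gradient f x - gradient f y‖ ≤ L * ‖x - y‖) (x y : F) :
    f x ≤ f y + ⟪gradient f y, x - y⟫ + L / 2 * ‖x - y‖ ^ 2 := by
  set w := x - y with hw
  set φ' : ℝ → ℝ := fun t => ⟪gradient f (y + t • w), w⟫ with hφ'
  have hpath : ∀ t : ℝ, HasDerivAt (fun t : ℝ => y + t • w) w t := fun t => by
    simpa using ((hasDerivAt_id t).smul_const w).const_add y
  have hderiv : ∀ t : ℝ, HasDerivAt (fun t => f (y + t • w)) (φ' t) t := by
    intro t
    have h1 : HasFDerivAt f (InnerProductSpace.toDual ℝ F (gradient f (y + t • w))) (y + t • w) :=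
      (hf _).hasGradientAt.hasFDerivAt
    have := h1.comp_hasDerivAt t (hpath t)
    exact this
  have hφcont : Continuous φ' := by
    have hg := fgd_grad_cont hlip
    exact Continuous.inner (hg.comp (by continuity)) continuous_const
  have hint : IntervalIntegrable φ' MeasureTheory.volume 0 1 :=
    hφcont.intervalIntegrable 0 1
  have hFTC : ∫ t in (0:ℝ)..1, φ' t = f x - f y := by
    have := intervalIntegral.integral_eq_sub_of_hasDerivAt
      (f := fun t => f (y + t • w)) (f' := φ')
      (fun t _ => hderiv t) hint
    simpa [hw] using this
  have hbound : ∀ t ∈ Set.Icc (0:ℝ) 1, φ' t - φ' 0 ≤ L * t * ‖w‖ ^ 2 := by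
    intro t ht
    have h1 : φ' t - φ' 0 = ⟪gradient f (y + t • w) - gradient f (y + (0:ℝ) • w), w⟫ := by
      rw [inner_sub_left]
    rw [h1]
    calc ⟪gradient f (y + t • w) - gradient f (y + (0:ℝ) • w), w⟫
        ≤ ‖gradient f (y + t • w) - gradient f (y + (0:ℝ) • w)‖ * ‖w‖ :=
          real_inner_le_norm _ _
      _ ≤ (L * ‖(y + t • w) - (y + (0:ℝ) • w)‖) * ‖w‖ := by
          gcongr; exact hlip _ _
      _ = L * t * ‖w‖ ^ 2 := by
          have : ‖(y + t • w) - (y + (0:ℝ) • w)‖ = t * ‖w‖ := by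
            simp [norm_smul, abs_of_nonneg ht.1]
          rw [this]; ring
  have hmono : ∫ t in (0:ℝ)..1, (φ' t - φ' 0) ≤ ∫ t in (0:ℝ)..1, L * t * ‖w‖ ^ 2 := by
    apply intervalIntegral.integral_mono_on (by norm_num)
    · exact (hφcont.sub continuous_const).intervalIntegrable 0 1
    · exact (Continuous.intervalIntegrable (by continuity) 0 1)
    · exact hbound
  have hval : ∫ t in (0:ℝ)..1, L * t * ‖w‖ ^ 2 = L / 2 * ‖w‖ ^ 2 := by
    have : ∀ t : ℝ, L * t * ‖w‖ ^ 2 = (L * ‖w‖ ^ 2) * t := fun t => by ring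
    simp only [this]
    rw [intervalIntegral.integral_const_mul, integral_id]
    ring
  have hlhs : ∫ t in (0:ℝ)..1, (φ' t - φ' 0) = (f x - f y) - φ' 0 := by
    rw [intervalIntegral.integral_sub hint (intervalIntegrable_const)]
    simp [hFTC]
  have hφ0 : φ' 0 = ⟪gradient f y, w⟫ := by simp [hφ']
  rw [hlhs, hval, hφ0] at hmono
  linarith

lemma fgd_pl {f : F → ℝ} {μ : ℝ} (hμ : 0 < μ)
    (hsc : ∀ x y : F, f y + ⟪gradient f y, x - y⟫ + μ / 2 * ‖x - y‖ ^ 2 ≤ f x)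
    (θs : F) (x : F) :
    2 * μ * (f x - f θs) ≤ ‖gradient f x‖ ^ 2 := by
  have h := hsc θs x
  have h2 : ⟪gradient f x, θs - x⟫ ≥ -(‖gradient f x‖ * ‖θs - x‖) := by
    have := real_inner_le_norm (gradient f x) (x - θs)
    have e : ⟪gradient f x, x - θs⟫ = -⟪gradient f x, θs - x⟫ := by
      rw [← inner_neg_right]; congr 1; abel
    rw [e, norm_sub_rev] at this
    linarith
  have hn : 0 ≤ ‖θs - x‖ := norm_nonneg _
  nlinarith [sq_nonneg (μ * ‖θs - x‖ - ‖gradient f x‖)]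

lemma fgd_grad_min_zero {f : F → ℝ}
    {θs : F} (hmin : ∀ x, f θs ≤ f x) : gradient f θs = 0 := by
  have hloc : IsLocalMin f θs := Filter.Eventually.of_forall hmin
  rw [gradient, hloc.fderiv_eq_zero, map_zero]

lemma fgd_indepFun_of_indep {Ω : Type*} [mΩ : MeasurableSpace Ω] {P : Measure Ω}
    {m₁ m₂ : MeasurableSpace Ω} {β γ : Type*} [MeasurableSpace β] [MeasurableSpace γ]
    {X : Ω → β} {Y : Ω → γ}
    (h : Indep m₁ m₂ P) (hX : Measurable[m₁] X) (hY : Measurable[m₂] Y) :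
    IndepFun X Y P := by
  rw [indepFun_iff_measure_inter_preimage_eq_mul]
  intro s t hs ht
  rw [Indep_iff] at h
  exact h _ _ (hX hs) (hY ht)

lemma fgd_norm_sq_eq {d : ℕ} (x : EuclideanSpace ℝ (Fin d)) : ‖x‖ ^ 2 = ∑ i, (x i) ^ 2 := by
  rw [← real_inner_self_eq_norm_sq, PiLp.inner_apply]
  simp [RCLike.inner_apply]

lemma fgd_inner_eq {d : ℕ} (x y : EuclideanSpace ℝ (Fin d)) : ⟪x, y⟫ = ∑ i, x i * y i := by
  rw [PiLp.inner_apply]; simp [RCLike.inner_apply]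
  exact Finset.sum_congr rfl fun _ _ => mul_comm _ _

lemma fgd_coord_le_norm {d : ℕ} (x : EuclideanSpace ℝ (Fin d)) (i : Fin d) : |x i| ≤ ‖x‖ := by
  have h1 : (x i) ^ 2 ≤ ‖x‖ ^ 2 := by
    rw [fgd_norm_sq_eq]
    exact Finset.single_le_sum (fun j _ => sq_nonneg (x j)) (Finset.mem_univ i)
  have h2 : 0 ≤ ‖x‖ := norm_nonneg x
  nlinarith [abs_nonneg (x i), sq_abs (x i)]

lemma fgd_norm_sq_of_pm {d : ℕ} (x : EuclideanSpace ℝ (Fin d))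
    (h : ∀ i, x i = 1 ∨ x i = -1) : ‖x‖ ^ 2 = d := by
  rw [fgd_norm_sq_eq]
  have : ∀ i ∈ Finset.univ, (x i) ^ 2 = (1:ℝ) := by
    intro i _
    rcases h i with h | h <;> rw [h] <;> norm_num
  rw [Finset.sum_congr rfl this]
  simp

end FGDAux

set_option maxHeartbeats 1000000 in
/-- **Convergence of forward-gradient descent (no surrogate model).**
Let `f : ℝ^d → ℝ` be `μ`-strongly convex and `L`-smooth with global minimizer `θ*`,
let `α ∈ (0, 1/(Ld)]`, and let `(v_k)` be i.i.d. random vectors whose components are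
independent Rademacher variables (all components over all steps are jointly independent).
For the forward-gradient descent sequence `θ_{k+1} = θ_k − α (∇f(θ_k)·v_k) v_k` started
from a deterministic `θ₀`, we have
`E[f(θ_k) − f(θ*)] ≤ (1 − αμ)^k (f(θ₀) − f(θ*))` for all `k`. -/
theorem forward_gradient_descent_convergence
    {Ω : Type*} [MeasurableSpace Ω] {P : Measure Ω} [IsProbabilityMeasure P]
    {d : ℕ} (f : EuclideanSpace ℝ (Fin d) → ℝ) (μ L : ℝ) (hμ : 0 < μ) (hL : 0 < L)
    (hf : Differentiable ℝ f)
    (hsc : ∀ x y : EuclideanSpace ℝ (Fin d),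
      f y + ⟪gradient f y, x - y⟫ + μ / 2 * ‖x - y‖ ^ 2 ≤ f x)
    (hlip : ∀ x y, ‖gradient f x - gradient f y‖ ≤ L * ‖x - y‖)
    (θs : EuclideanSpace ℝ (Fin d)) (hmin : ∀ x, f θs ≤ f x)
    (α : ℝ) (hα0 : 0 < α) (hα1 : α ≤ 1 / (L * d))
    (v : ℕ → Ω → EuclideanSpace ℝ (Fin d)) (hmeas : ∀ k, Measurable (v k))
    (hindep : iIndepFun
      (fun (p : ℕ × Fin d) ω => v p.1 ω p.2) P)
    (hrad : ∀ k i, P {ω | v k ω i = 1} = 1/2 ∧ P {ω | v k ω i = -1} = 1/2)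
    (θ0 : EuclideanSpace ℝ (Fin d)) (θ : ℕ → Ω → EuclideanSpace ℝ (Fin d))
    (h0 : ∀ ω, θ 0 ω = θ0)
    (hrec : ∀ k ω, θ (k + 1) ω = θ k ω - α • (⟪gradient f (θ k ω), v k ω⟫ • v k ω)) :
    ∀ k : ℕ, ∫ ω, (f (θ k ω) - f θs) ∂P ≤ (1 - α * μ) ^ k * (f θ0 - f θs) := by
  -- d ≥ 1
  have hd : 0 < d := by
    rcases Nat.eq_zero_or_pos d with h | h
    · exfalso; subst h; simp at hα1; linarith
    · exact h
  have hd1 : (1:ℝ) ≤ (d:ℝ) := by exact_mod_cast hd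
  -- μ ≤ L
  have hμL : μ ≤ L := by
    set u : EuclideanSpace ℝ (Fin d) := EuclideanSpace.single ⟨0, hd⟩ 1 with hu_def
    have hu : ‖u‖ = 1 := by simp [hu_def, EuclideanSpace.norm_single]
    have h1 := hsc (θs + u) θs
    have h2 := hsc θs (θs + u)
    have e1 : θs + u - θs = u := by abel
    have e2 : θs - (θs + u) = -u := by abel
    rw [e1] at h1
    rw [e2, inner_neg_right, norm_neg] at h2
    have hcs : ⟪gradient f (θs + u) - gradient f θs, u⟫ ≤ L * ‖u‖ ^ 2 := by
      calc ⟪gradient f (θs + u) - gradient f θs, u⟫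
          ≤ ‖gradient f (θs + u) - gradient f θs‖ * ‖u‖ := real_inner_le_norm _ _
        _ ≤ (L * ‖θs + u - θs‖) * ‖u‖ := by gcongr; exact hlip _ _
        _ = L * ‖u‖ ^ 2 := by rw [e1]; ring
    rw [inner_sub_left] at hcs
    rw [hu] at h1 h2 hcs
    nlinarith
  -- step size facts
  have hLd : (0:ℝ) < L * d := by positivity
  have hαLd : α * (L * d) ≤ 1 := (le_div_iff₀ hLd).mp hα1
  have hαμ : 0 ≤ 1 - α * μ := by nlinarith
  -- continuity / measurability basics
  have hγcont : Continuous (gradient f) := fgd_grad_cont hlip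
  have hfc : Continuous f := hf.continuous
  have hgzero : gradient f θs = 0 := fgd_grad_min_zero hmin
  have hθmeas : ∀ k, Measurable (θ k) := by
    intro k
    induction k with
    | zero =>
      have e : θ 0 = fun _ => θ0 := funext h0
      rw [e]; exact measurable_const
    | succ k ih =>
      have e : θ (k+1) = fun ω => θ k ω - α • (⟪gradient f (θ k ω), v k ω⟫ • v k ω) :=
        funext (hrec k)
      rw [e]
      exact ih.sub ((((hγcont.measurable.comp ih).inner (𝕜 := ℝ) (hmeas k)).smul (hmeas k)).const_smul α)
  -- a.e. Rademacher values
  have hv_ae : ∀ᵐ ω ∂P, ∀ k i, v k ω i = 1 ∨ v k ω i = -1 := by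
    rw [ae_all_iff]
    intro k
    rw [ae_all_iff]
    intro i
    have hAm : MeasurableSet {ω | v k ω i = 1} := by
      have := ((measurable_pi_apply i).comp ((WithLp.measurable_ofLp 2 _).comp (hmeas k))) (measurableSet_singleton (1:ℝ))
      exact this
    have hBm : MeasurableSet {ω | v k ω i = -1} := by
      have := ((measurable_pi_apply i).comp ((WithLp.measurable_ofLp 2 _).comp (hmeas k))) (measurableSet_singleton (-1:ℝ))
      exact this
    have hdisj : Disjoint {ω | v k ω i = 1} {ω | v k ω i = -1} := by
      rw [Set.disjoint_left]
      intro ω h1 h2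
      simp only [Set.mem_setOf_eq] at h1 h2
      rw [h1] at h2; norm_num at h2
    have hunion : P ({ω | v k ω i = 1} ∪ {ω | v k ω i = -1}) = 1 := by
      rw [measure_union hdisj hBm, (hrad k i).1, (hrad k i).2]
      rw [ENNReal.div_add_div_same]
      have e : (1:ENNReal) + 1 = 2 := one_add_one_eq_two
      rw [e]
      exact ENNReal.div_self two_ne_zero ENNReal.ofNat_ne_top
    have hcompl : P ({ω | v k ω i = 1} ∪ {ω | v k ω i = -1})ᶜ = 0 := by
      rw [measure_compl (hAm.union hBm) (measure_ne_top _ _), hunion, measure_univ]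
      simp
    rw [ae_iff]
    refine measure_mono_null ?_ hcompl
    intro ω hω
    simp only [Set.mem_setOf_eq, not_or] at hω
    simp only [Set.mem_compl_iff, Set.mem_union, Set.mem_setOf_eq, not_or]
    exact hω
  -- a.s. bound on trajectories
  have hbound : ∀ k, ∃ C : ℝ, 0 ≤ C ∧ ∀ᵐ ω ∂P, ‖θ k ω - θs‖ ≤ C := by
    intro k
    induction k with
    | zero =>
      exact ⟨‖θ0 - θs‖, norm_nonneg _, Filter.Eventually.of_forall fun ω => by rw [h0]⟩
    | succ k ih =>
      obtain ⟨C, hC0, hC⟩ := ih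
      refine ⟨(1 + α * L * d) * C, by positivity, ?_⟩
      filter_upwards [hC, hv_ae] with ω h1 h2
      rw [hrec k ω]
      have hvn : ‖v k ω‖ ^ 2 = d := fgd_norm_sq_of_pm _ (h2 k)
      set g := gradient f (θ k ω) with hg_def
      have hg : ‖g‖ ≤ L * C := by
        calc ‖g‖ = ‖g - gradient f θs‖ := by rw [hgzero, sub_zero]
          _ ≤ L * ‖θ k ω - θs‖ := hlip _ _
          _ ≤ L * C := by gcongr
      have hterm : ‖α • (⟪g, v k ω⟫ • v k ω)‖ ≤ α * L * d * C := by
        rw [norm_smul, norm_smul, Real.norm_eq_abs, Real.norm_eq_abs, abs_of_pos hα0]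
        calc α * (|⟪g, v k ω⟫| * ‖v k ω‖)
            ≤ α * ((‖g‖ * ‖v k ω‖) * ‖v k ω‖) := by
              gcongr; exact abs_real_inner_le_norm _ _
          _ = α * (‖g‖ * ‖v k ω‖ ^ 2) := by ring
          _ = α * (‖g‖ * d) := by rw [hvn]
          _ ≤ α * ((L * C) * d) := by gcongr
          _ = α * L * d * C := by ring
      calc ‖θ k ω - α • (⟪g, v k ω⟫ • v k ω) - θs‖
          = ‖(θ k ω - θs) - α • (⟪g, v k ω⟫ • v k ω)‖ := by congr 1; abel
        _ ≤ ‖θ k ω - θs‖ + ‖α • (⟪g, v k ω⟫ • v k ω)‖ := norm_sub_le _ _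
        _ ≤ C + α * L * d * C := add_le_add h1 hterm
        _ = (1 + α * L * d) * C := by ring
  -- integrability of objective gaps
  have hfint : ∀ k, Integrable (fun ω => f (θ k ω) - f θs) P := by
    intro k
    obtain ⟨C, hC0, hC⟩ := hbound k
    refine Integrable.mono' (integrable_const (L / 2 * C ^ 2))
      (((hfc.measurable.comp (hθmeas k)).sub measurable_const).aestronglyMeasurable) ?_
    filter_upwards [hC] with ω hω
    have hub : f (θ k ω) - f θs ≤ L / 2 * C ^ 2 := by
      have := fgd_descent hf hlip (θ k ω) θs
      rw [hgzero] at this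
      simp only [inner_zero_left] at this
      have h2 : L / 2 * ‖θ k ω - θs‖ ^ 2 ≤ L / 2 * C ^ 2 := by gcongr
      linarith
    have hlb : 0 ≤ f (θ k ω) - f θs := by linarith [hmin (θ k ω)]
    rw [Real.norm_eq_abs, abs_of_nonneg hlb]
    exact hub
  -- integrability of gradient norm squares
  have hG2int : ∀ k, Integrable (fun ω => ‖gradient f (θ k ω)‖ ^ 2) P := by
    intro k
    obtain ⟨C, hC0, hC⟩ := hbound k
    refine Integrable.mono' (integrable_const ((L * C) ^ 2))
      ((((hγcont.measurable.comp (hθmeas k)).norm).pow_const 2).aestronglyMeasurable) ?_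
    filter_upwards [hC] with ω hω
    have hg : ‖gradient f (θ k ω)‖ ≤ L * C := by
      calc ‖gradient f (θ k ω)‖ = ‖gradient f (θ k ω) - gradient f θs‖ := by
            rw [hgzero, sub_zero]
        _ ≤ L * ‖θ k ω - θs‖ := hlip _ _
        _ ≤ L * C := by gcongr
    rw [Real.norm_eq_abs, abs_of_nonneg (sq_nonneg _)]
    exact sq_le_sq' (by nlinarith [norm_nonneg (gradient f (θ k ω))]) hg
  -- integrability of squared directional derivative
  have hc2int : ∀ k, Integrable (fun ω => ⟪gradient f (θ k ω), v k ω⟫ ^ 2) P := by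
    intro k
    obtain ⟨C, hC0, hC⟩ := hbound k
    refine Integrable.mono' (integrable_const ((L * C) ^ 2 * d))
      ((((hγcont.measurable.comp (hθmeas k)).inner (hmeas k)).pow_const 2).aestronglyMeasurable) ?_
    filter_upwards [hC, hv_ae] with ω hω hv
    have hvn : ‖v k ω‖ ^ 2 = d := fgd_norm_sq_of_pm _ (hv k)
    have hg : ‖gradient f (θ k ω)‖ ≤ L * C := by
      calc ‖gradient f (θ k ω)‖ = ‖gradient f (θ k ω) - gradient f θs‖ := by
            rw [hgzero, sub_zero]
        _ ≤ L * ‖θ k ω - θs‖ := hlip _ _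
        _ ≤ L * C := by gcongr
    rw [Real.norm_eq_abs, abs_of_nonneg (sq_nonneg _)]
    have h2 : |⟪gradient f (θ k ω), v k ω⟫| ≤ ‖gradient f (θ k ω)‖ * ‖v k ω‖ :=
      abs_real_inner_le_norm _ _
    calc ⟪gradient f (θ k ω), v k ω⟫ ^ 2
        = |⟪gradient f (θ k ω), v k ω⟫| ^ 2 := (sq_abs _).symm
      _ ≤ (‖gradient f (θ k ω)‖ * ‖v k ω‖) ^ 2 := pow_le_pow_left₀ (abs_nonneg _) h2 2
      _ = ‖gradient f (θ k ω)‖ ^ 2 * ‖v k ω‖ ^ 2 := mul_pow _ _ 2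
      _ = ‖gradient f (θ k ω)‖ ^ 2 * d := by rw [hvn]
      _ ≤ (L * C) ^ 2 * d := by
          have hsq : ‖gradient f (θ k ω)‖ ^ 2 ≤ (L * C) ^ 2 :=
            pow_le_pow_left₀ (norm_nonneg _) hg 2
          exact mul_le_mul_of_nonneg_right hsq (Nat.cast_nonneg d)
  -- coordinate measurability and sigma-algebras
  have hcoordmeas : ∀ (p : ℕ × Fin d), Measurable (fun ω => v p.1 ω p.2) :=
    fun p => (measurable_pi_apply p.2).comp ((WithLp.measurable_ofLp 2 _).comp (hmeas p.1))
  set m' : ℕ × Fin d → MeasurableSpace Ω := fun p =>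
    MeasurableSpace.comap (fun ω => v p.1 ω p.2) inferInstance with hm'
  have h_le : ∀ p : ℕ × Fin d, m' p ≤ ‹MeasurableSpace Ω› :=
    fun p => (hcoordmeas p).comap_le
  have hiI : iIndep m' P := hindep.iIndep
  have hGsig : ∀ k, Indep (⨆ p ∈ {q : ℕ × Fin d | q.1 < k}, m' p)
      (⨆ p ∈ {q : ℕ × Fin d | q.1 = k}, m' p) P := by
    intro k
    refine indep_iSup_of_disjoint h_le hiI ?_
    rw [Set.disjoint_left]
    intro q hq1 hq2
    simp only [Set.mem_setOf_eq] at hq1 hq2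
    omega
  have hvG : ∀ k, Measurable[⨆ p ∈ {q : ℕ × Fin d | q.1 = k}, m' p] (v k) := by
    intro k
    refine (WithLp.measurable_toLp 2 (Fin d → ℝ)).comp (@measurable_pi_lambda Ω (Fin d) (fun _ => ℝ)
      (⨆ p ∈ {q : ℕ × Fin d | q.1 = k}, m' p) _ (fun ω => (v k ω).ofLp) (fun i => ?_))
    have h1 : Measurable[m' (k, i)] (fun ω => v k ω i) := measurable_iff_comap_le.mpr le_rfl
    exact h1.mono
      (le_biSup m' (show ((k,i) : ℕ × Fin d) ∈ {q : ℕ × Fin d | q.1 = k} from rfl)) le_rfl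
  have hθG : ∀ k, Measurable[⨆ p ∈ {q : ℕ × Fin d | q.1 < k}, m' p] (θ k) := by
    intro k
    induction k with
    | zero =>
      have e : θ 0 = fun _ => θ0 := funext h0
      rw [e]; exact measurable_const
    | succ k ih =>
      have hmono : (⨆ p ∈ {q : ℕ × Fin d | q.1 < k}, m' p)
          ≤ ⨆ p ∈ {q : ℕ × Fin d | q.1 < k + 1}, m' p :=
        biSup_mono (fun p hp => Nat.lt_succ_of_lt hp)
      have hmono2 : (⨆ p ∈ {q : ℕ × Fin d | q.1 = k}, m' p)
          ≤ ⨆ p ∈ {q : ℕ × Fin d | q.1 < k + 1}, m' p :=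
        biSup_mono (fun p hp => by simp only [Set.mem_setOf_eq] at *; omega)
      have hθk := ih.mono hmono le_rfl
      have hvk := (hvG k).mono hmono2 le_rfl
      have hcont : Continuous (fun p : EuclideanSpace ℝ (Fin d) × EuclideanSpace ℝ (Fin d) =>
          p.1 - α • (⟪gradient f p.1, p.2⟫ • p.2)) := by
        apply continuous_fst.sub
        exact ((Continuous.inner (𝕜 := ℝ) (hγcont.comp continuous_fst) continuous_snd).smul
          continuous_snd).const_smul α
      have e : θ (k+1) = (fun p : EuclideanSpace ℝ (Fin d) × EuclideanSpace ℝ (Fin d) =>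
          p.1 - α • (⟪gradient f p.1, p.2⟫ • p.2)) ∘ (fun ω => (θ k ω, v k ω)) :=
        funext fun ω => hrec k ω
      rw [e]
      exact hcont.measurable.comp (hθk.prodMk hvk)
  -- expectations of Rademacher coordinates
  have hvint : ∀ k i, Integrable (fun ω => v k ω i) P := by
    intro k i
    refine Integrable.mono' (integrable_const 1) (hcoordmeas (k,i)).aestronglyMeasurable ?_
    filter_upwards [hv_ae] with ω hω
    rcases hω k i with h | h <;> rw [Real.norm_eq_abs, h] <;> norm_num
  have hEw : ∀ k i, ∫ ω, v k ω i ∂P = 0 := by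
    intro k i
    have hAm : MeasurableSet {ω | v k ω i = 1} := by
      have := ((measurable_pi_apply i).comp ((WithLp.measurable_ofLp 2 _).comp (hmeas k))) (measurableSet_singleton (1:ℝ))
      exact this
    have hBm : MeasurableSet {ω | v k ω i = -1} := by
      have := ((measurable_pi_apply i).comp ((WithLp.measurable_ofLp 2 _).comp (hmeas k))) (measurableSet_singleton (-1:ℝ))
      exact this
    have hae : (fun ω => v k ω i) =ᵐ[P]
        fun ω => Set.indicator {ω' | v k ω' i = 1} (fun _ => (1:ℝ)) ω
          + Set.indicator {ω' | v k ω' i = -1} (fun _ => (-1:ℝ)) ω := by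
      filter_upwards [hv_ae] with ω hω
      rcases hω k i with h | h
      · have h1 : ω ∈ {ω' | v k ω' i = 1} := h
        have h2 : ω ∉ {ω' | v k ω' i = -1} := by
          simp only [Set.mem_setOf_eq]; rw [h]; norm_num
        rw [Set.indicator_of_mem h1, Set.indicator_of_notMem h2, h]; ring
      · have h1 : ω ∉ {ω' | v k ω' i = 1} := by
          simp only [Set.mem_setOf_eq]; rw [h]; norm_num
        have h2 : ω ∈ {ω' | v k ω' i = -1} := h
        rw [Set.indicator_of_mem h2, Set.indicator_of_notMem h1, h]; ring
    rw [integral_congr_ae hae, integral_add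
      ((integrable_const (1:ℝ)).indicator hAm) ((integrable_const (-1:ℝ)).indicator hBm),
      integral_indicator_const _ hAm, integral_indicator_const _ hBm,
      measureReal_def, measureReal_def, (hrad k i).1, (hrad k i).2]
    norm_num
  have hEww : ∀ k (i j : Fin d), i ≠ j → ∫ ω, v k ω i * v k ω j ∂P = 0 := by
    intro k i j hij
    have hne : ((k,i) : ℕ × Fin d) ≠ (k,j) := by simp [hij]
    have hIF : IndepFun (fun ω => v k ω i) (fun ω => v k ω j) P :=
      hindep.indepFun hne
    have h5 := hIF.integral_fun_mul_eq_mul_integral (hvint k i).aestronglyMeasurable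
      (hvint k j).aestronglyMeasurable
    rw [hEw k i, zero_mul] at h5
    exact h5
  -- key identity: second moment of directional derivative
  have hEc2 : ∀ k, ∫ ω, ⟪gradient f (θ k ω), v k ω⟫ ^ 2 ∂P
      = ∫ ω, ‖gradient f (θ k ω)‖ ^ 2 ∂P := by
    intro k
    obtain ⟨C, hC0, hC⟩ := hbound k
    set G : Ω → EuclideanSpace ℝ (Fin d) := fun ω => gradient f (θ k ω) with hG
    have hGmeas : Measurable G := hγcont.measurable.comp (hθmeas k)
    have hGimeas : ∀ i : Fin d, Measurable fun ω => G ω i :=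
      fun i => (measurable_pi_apply i).comp ((WithLp.measurable_ofLp 2 _).comp hGmeas)
    have hGbd : ∀ᵐ ω ∂P, ∀ i : Fin d, |G ω i| ≤ L * C := by
      filter_upwards [hC] with ω hω
      intro i
      refine (fgd_coord_le_norm (G ω) i).trans ?_
      calc ‖G ω‖ = ‖G ω - gradient f θs‖ := by rw [hgzero, sub_zero]
        _ ≤ L * ‖θ k ω - θs‖ := hlip _ _
        _ ≤ L * C := by gcongr
    have hterm_int : ∀ i j : Fin d,
        Integrable (fun ω => (G ω i * v k ω i) * (G ω j * v k ω j)) P := by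
      intro i j
      refine Integrable.mono' (integrable_const ((L*C) * (L*C)))
        ((((hGimeas i).mul (hcoordmeas (k,i))).mul
          ((hGimeas j).mul (hcoordmeas (k,j)))).aestronglyMeasurable) ?_
      filter_upwards [hGbd, hv_ae] with ω h1 h2
      have hvi : |v k ω i| ≤ 1 := by rcases h2 k i with h | h <;> rw [h] <;> norm_num
      have hvj : |v k ω j| ≤ 1 := by rcases h2 k j with h | h <;> rw [h] <;> norm_num
      have hLC0 : (0:ℝ) ≤ L * C := by positivity
      rw [Real.norm_eq_abs, abs_mul, abs_mul, abs_mul]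
      calc |G ω i| * |v k ω i| * (|G ω j| * |v k ω j|)
          ≤ (L*C) * 1 * ((L*C) * 1) := by
            apply mul_le_mul
            · exact mul_le_mul (h1 i) hvi (abs_nonneg _) hLC0
            · exact mul_le_mul (h1 j) hvj (abs_nonneg _) hLC0
            · positivity
            · positivity
        _ = (L*C) * (L*C) := by ring
    have hexp : ∀ ω, ⟪G ω, v k ω⟫ ^ 2
        = ∑ i, ∑ j, (G ω i * v k ω i) * (G ω j * v k ω j) := by
      intro ω
      rw [fgd_inner_eq, sq, Finset.sum_mul_sum]
    have hsum : ∫ ω, ⟪G ω, v k ω⟫ ^ 2 ∂P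
        = ∑ i, ∑ j, ∫ ω, (G ω i * v k ω i) * (G ω j * v k ω j) ∂P := by
      rw [integral_congr_ae (Filter.Eventually.of_forall hexp)]
      rw [integral_finset_sum _ (fun i _ => integrable_finset_sum _ (fun j _ => hterm_int i j))]
      exact Finset.sum_congr rfl fun i _ =>
        integral_finset_sum _ (fun j _ => hterm_int i j)
    have hoff : ∀ i j : Fin d, i ≠ j →
        ∫ ω, (G ω i * v k ω i) * (G ω j * v k ω j) ∂P = 0 := by
      intro i j hij
      have he : (fun ω => (G ω i * v k ω i) * (G ω j * v k ω j))
          = fun ω => (G ω i * G ω j) * (v k ω i * v k ω j) := by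
        funext ω; ring
      rw [he]
      have hX : Measurable[⨆ p ∈ {q : ℕ × Fin d | q.1 < k}, m' p]
          (fun ω => G ω i * G ω j) := by
        have hgi : Measurable
            (fun x : EuclideanSpace ℝ (Fin d) => gradient f x i * gradient f x j) :=
          ((measurable_pi_apply i).comp ((WithLp.measurable_ofLp 2 _).comp hγcont.measurable)).mul
            ((measurable_pi_apply j).comp ((WithLp.measurable_ofLp 2 _).comp hγcont.measurable))
        exact hgi.comp (hθG k)
      have hY : Measurable[⨆ p ∈ {q : ℕ × Fin d | q.1 = k}, m' p]
          (fun ω => v k ω i * v k ω j) := by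
        have h1 : Measurable[m' (k, i)] (fun ω => v k ω i) := measurable_iff_comap_le.mpr le_rfl
        have h2 : Measurable[m' (k, j)] (fun ω => v k ω j) := measurable_iff_comap_le.mpr le_rfl
        exact (h1.mono
            (le_biSup m' (show ((k,i):ℕ × Fin d) ∈ {q : ℕ × Fin d | q.1 = k} from rfl))
            le_rfl).mul
          (h2.mono
            (le_biSup m' (show ((k,j):ℕ × Fin d) ∈ {q : ℕ × Fin d | q.1 = k} from rfl))
            le_rfl)
      have hIF : IndepFun (fun ω => G ω i * G ω j) (fun ω => v k ω i * v k ω j) P :=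
        fgd_indepFun_of_indep (hGsig k) hX hY
      have h5 := hIF.integral_fun_mul_eq_mul_integral (((hGimeas i).mul (hGimeas j)).aestronglyMeasurable)
        (((hcoordmeas (k,i)).mul (hcoordmeas (k,j))).aestronglyMeasurable)
      rw [hEww k i j hij, mul_zero] at h5
      exact h5
    have hdiag : ∀ i : Fin d,
        ∫ ω, (G ω i * v k ω i) * (G ω i * v k ω i) ∂P = ∫ ω, (G ω i)^2 ∂P := by
      intro i
      apply integral_congr_ae
      filter_upwards [hv_ae] with ω hω
      rcases hω k i with h | h <;> rw [h] <;> ring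
    have hGi_int : ∀ i : Fin d, Integrable (fun ω => (G ω i)^2) P := by
      intro i
      refine Integrable.mono' (integrable_const ((L*C)^2))
        (((hGimeas i).pow_const 2).aestronglyMeasurable) ?_
      filter_upwards [hGbd] with ω h1
      rw [Real.norm_eq_abs, abs_of_nonneg (sq_nonneg _), ← sq_abs]
      exact pow_le_pow_left₀ (abs_nonneg _) (h1 i) 2
    calc ∫ ω, ⟪G ω, v k ω⟫ ^ 2 ∂P
        = ∑ i, ∑ j, ∫ ω, (G ω i * v k ω i) * (G ω j * v k ω j) ∂P := hsum
      _ = ∑ i : Fin d, ∫ ω, (G ω i)^2 ∂P := by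
          refine Finset.sum_congr rfl fun i _ => ?_
          have hsingle := Finset.sum_eq_single_of_mem
            (f := fun j => ∫ ω, (G ω i * v k ω i) * (G ω j * v k ω j) ∂P)
            i (Finset.mem_univ i) (fun j _ hji => hoff i j (Ne.symm hji))
          rw [hsingle]
          exact hdiag i
      _ = ∫ ω, ∑ i, (G ω i)^2 ∂P := (integral_finset_sum _ (fun i _ => hGi_int i)).symm
      _ = ∫ ω, ‖G ω‖ ^ 2 ∂P := by
          refine integral_congr_ae (Filter.Eventually.of_forall fun ω => ?_)
          exact (fgd_norm_sq_eq (G ω)).symm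
  -- per-step contraction
  have hstep : ∀ k, ∫ ω, (f (θ (k+1) ω) - f θs) ∂P
      ≤ (1 - α * μ) * ∫ ω, (f (θ k ω) - f θs) ∂P := by
    intro k
    have hptwise : ∀ᵐ ω ∂P, f (θ (k+1) ω) - f θs
        ≤ (f (θ k ω) - f θs) - α / 2 * ⟪gradient f (θ k ω), v k ω⟫ ^ 2 := by
      filter_upwards [hv_ae] with ω hω
      set g := gradient f (θ k ω) with hg_def
      set w := v k ω with hw_def
      set c := (⟪g, w⟫ : ℝ) with hc_def
      have hvn : ‖w‖ ^ 2 = d := fgd_norm_sq_of_pm _ (hω k)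
      have hdesc := fgd_descent hf hlip (θ (k+1) ω) (θ k ω)
      have hdiff : θ (k+1) ω - θ k ω = (-(α * c)) • w := by
        rw [hrec k ω, smul_smul, neg_smul]
        abel
      have hinner : ⟪g, θ (k+1) ω - θ k ω⟫ = -(α * c) * c := by
        rw [hdiff, real_inner_smul_right, ← hc_def]
      have hnorm : ‖θ (k+1) ω - θ k ω‖ ^ 2 = (α * c)^2 * d := by
        rw [hdiff, norm_smul, mul_pow, Real.norm_eq_abs, sq_abs, hvn]
        ring
      rw [hinner, hnorm] at hdesc
      nlinarith [sq_nonneg c,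
        mul_nonneg (mul_nonneg hα0.le (sq_nonneg c)) (sub_nonneg.mpr hαLd)]
    have hrhs_int : Integrable
        (fun ω => (f (θ k ω) - f θs) - α / 2 * ⟪gradient f (θ k ω), v k ω⟫ ^ 2) P :=
      (hfint k).sub ((hc2int k).const_mul (α / 2))
    have h2 := integral_mono_ae (hfint (k+1)) hrhs_int hptwise
    rw [integral_sub (hfint k) ((hc2int k).const_mul (α / 2)),
      integral_const_mul, hEc2 k] at h2
    have h3 : 2 * μ * ∫ ω, (f (θ k ω) - f θs) ∂P
        ≤ ∫ ω, ‖gradient f (θ k ω)‖ ^ 2 ∂P := by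
      have h4 := integral_mono_ae ((hfint k).const_mul (2 * μ)) (hG2int k)
        (Filter.Eventually.of_forall fun ω => fgd_pl hμ hsc θs (θ k ω))
      rwa [integral_const_mul] at h4
    nlinarith [mul_le_mul_of_nonneg_left h3 hα0.le]
  -- conclusion by induction
  intro k
  induction k with
  | zero =>
    have e : (fun ω => f (θ 0 ω) - f θs) = fun _ => f θ0 - f θs := by
      funext ω; rw [h0]
    rw [e, integral_const]
    simp
  | succ k ih =>
    calc ∫ ω, (f (θ (k+1) ω) - f θs) ∂P
        ≤ (1 - α * μ) * ∫ ω, (f (θ k ω) - f θs) ∂P := hstep k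
      _ ≤ (1 - α * μ) * ((1 - α * μ) ^ k * (f θ0 - f θs)) :=
          mul_le_mul_of_nonneg_left ih hαμ
      _ = (1 - α * μ) ^ (k+1) * (f θ0 - f θs) := by ring
end

section
/- Let f : ℝ^d → ℝ be L-smooth, let f̂ : ℝ^d → ℝ be differentiable, let ε > 0, let θ ∈ ℝ^d, and let v be a random vector in ℝ^d with independent Rademacher components. Then the bias of the finite-difference control variate forward gradient h_{v,ε}(θ) = ((f(θ+εv) − f(θ))/ε) v − (∇f̂(θ)·v)v + ∇f̂(θ) satisfies ‖E[h_{v,ε}(θ)] − ∇f(θ)‖ ≤ ε L d^{3/2} / 2. -/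
open MeasureTheory ProbabilityTheory
open scoped RealInnerProductSpace

lemma taylor_smooth_bound {F : Type*} [NormedAddCommGroup F] [InnerProductSpace ℝ F]
    [CompleteSpace F] (f : F → ℝ) (L : ℝ) (hL : 0 ≤ L) (hf : Differentiable ℝ f)
    (hlip : ∀ x y, ‖gradient f x - gradient f y‖ ≤ L * ‖x - y‖) (x u : F) :
    |f (x + u) - f x - ⟪gradient f x, u⟫| ≤ L / 2 * ‖u‖ ^ 2 := by
  have hgc : Continuous (gradient f) := by
    have h : LipschitzWith (Real.toNNReal L) (gradient f) := by
      apply LipschitzWith.of_dist_le_mul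
      intro a b
      rw [dist_eq_norm, dist_eq_norm]
      refine (hlip a b).trans ?_
      exact mul_le_mul_of_nonneg_right (Real.le_coe_toNNReal L) (norm_nonneg _)
    exact h.continuous
  set g' : ℝ → ℝ := fun t => ⟪gradient f (x + t • u), u⟫ with hg'def
  have hg : ∀ t : ℝ, HasDerivAt (fun s : ℝ => f (x + s • u)) (g' t) t := by
    intro t
    have hc : HasDerivAt (fun s : ℝ => x + s • u) u t := by
      simpa using ((hasDerivAt_id t).smul_const u).const_add x
    have h2 := ((hf (x + t • u)).hasGradientAt.hasFDerivAt).comp_hasDerivAt t hc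
    have h3 : HasDerivAt (fun s : ℝ => f (x + s • u))
        ((InnerProductSpace.toDual ℝ F (gradient f (x + t • u))) u) t := h2
    rw [InnerProductSpace.toDual_apply_apply] at h3
    exact h3
  have hg'c : Continuous g' := by
    apply Continuous.inner ?_ continuous_const
    exact hgc.comp (by continuity)
  have hInt : IntervalIntegrable g' volume 0 1 := hg'c.intervalIntegrable 0 1
  have key : ∫ t in (0:ℝ)..1, g' t = f (x + u) - f x := by
    have h := intervalIntegral.integral_eq_sub_of_hasDerivAt (f := fun s : ℝ => f (x + s • u))
      (fun t _ => hg t) hInt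
    simpa using h
  have hg'0 : g' 0 = ⟪gradient f x, u⟫ := by simp [hg'def]
  have hsplit : f (x + u) - f x - ⟪gradient f x, u⟫ = ∫ t in (0:ℝ)..1, (g' t - g' 0) := by
    rw [intervalIntegral.integral_sub hInt intervalIntegrable_const, key, hg'0]
    simp
  rw [← Real.norm_eq_abs, hsplit]
  have hb : ∀ t ∈ Set.uIoc (0:ℝ) 1, ‖g' t - g' 0‖ ≤ (L * ‖u‖ ^ 2) * t := by
    intro t ht
    rw [Set.uIoc_of_le (by norm_num)] at ht
    have h1 : ‖gradient f (x + t • u) - gradient f x‖ ≤ L * (t * ‖u‖) := by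
      have := hlip (x + t • u) x
      simpa [norm_smul, abs_of_pos ht.1] using this
    have h2 : g' t - g' 0 = ⟪gradient f (x + t • u) - gradient f x, u⟫ := by
      rw [hg'0, hg'def, inner_sub_left]
    rw [h2, Real.norm_eq_abs]
    calc |⟪gradient f (x + t • u) - gradient f x, u⟫|
        ≤ ‖gradient f (x + t • u) - gradient f x‖ * ‖u‖ := abs_real_inner_le_norm _ _
      _ ≤ (L * (t * ‖u‖)) * ‖u‖ := mul_le_mul_of_nonneg_right h1 (norm_nonneg _)
      _ = (L * ‖u‖ ^ 2) * t := by ring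
  have hbint : IntervalIntegrable (fun t => (L * ‖u‖ ^ 2) * t) volume 0 1 :=
    (continuous_const.mul continuous_id).intervalIntegrable 0 1
  have := intervalIntegral.norm_integral_le_abs_of_norm_le (μ := volume) (a := (0:ℝ)) (b := 1)
    (f := fun t => g' t - g' 0) (g := fun t => (L * ‖u‖ ^ 2) * t)
    ((ae_restrict_iff' measurableSet_uIoc).2 (Filter.Eventually.of_forall hb)) hbint
  refine this.trans ?_
  rw [intervalIntegral.integral_const_mul, integral_id]
  rw [abs_of_nonneg (by positivity)]
  ring_nf
  nlinarith [sq_nonneg ‖u‖]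


/-- **Bias bound for the finite-difference control variate forward gradient.**
If `f` is `L`-smooth, `f̂` differentiable, `ε > 0`, and `v` has independent Rademacher
components, then the bias of
`h_{v,ε}(θ) = ((f(θ+εv) − f(θ))/ε) v − (∇f̂(θ)·v)v + ∇f̂(θ)` satisfies
`‖E[h_{v,ε}(θ)] − ∇f(θ)‖ ≤ ε L d^{3/2} / 2`. -/
theorem fd_cv_forward_gradient_bias_bound
    {Ω : Type*} [MeasurableSpace Ω] {μ : Measure Ω} [IsProbabilityMeasure μ]
    {d : ℕ} (f fhat : EuclideanSpace ℝ (Fin d) → ℝ) (L : ℝ) (hL : 0 ≤ L)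
    (hf : Differentiable ℝ f)
    (hlip : ∀ x y, ‖gradient f x - gradient f y‖ ≤ L * ‖x - y‖)
    (hfhat : Differentiable ℝ fhat)
    (ε : ℝ) (hε : 0 < ε) (θ : EuclideanSpace ℝ (Fin d))
    (v : Ω → EuclideanSpace ℝ (Fin d)) (hmeas : Measurable v)
    (hindep : iIndepFun (fun i ω => v ω i) μ)
    (hrad : ∀ i, μ {ω | v ω i = 1} = 1/2 ∧ μ {ω | v ω i = -1} = 1/2) :
    ‖(∫ ω, (((f (θ + ε • v ω) - f θ) / ε) • v ω - ⟪gradient fhat θ, v ω⟫ • v ω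
        + gradient fhat θ) ∂μ) - gradient f θ‖
      ≤ ε * L * (d : ℝ) ^ ((3 : ℝ) / 2) / 2 := by
  classical
  set w := gradient f θ with hwdef
  set wh := gradient fhat θ with hwhdef
  have hmi : ∀ i, Measurable fun ω => v ω i := fun i => (EuclideanSpace.proj (𝕜 := ℝ) i).continuous.measurable.comp hmeas
  -- a.e. each component is ±1
  have hae : ∀ᵐ ω ∂μ, ∀ i, v ω i = 1 ∨ v ω i = -1 := by
    rw [MeasureTheory.ae_all_iff]
    intro i
    have hA : MeasurableSet {ω | v ω i = 1} := (hmi i) (measurableSet_singleton 1)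
    have hB : MeasurableSet {ω | v ω i = -1} := (hmi i) (measurableSet_singleton (-1))
    have hdisj : Disjoint {ω | v ω i = 1} {ω | v ω i = -1} := by
      rw [Set.disjoint_left]
      rintro ω h1 h2
      simp only [Set.mem_setOf_eq] at h1 h2
      rw [h1] at h2; norm_num at h2
    have hunion : μ ({ω | v ω i = 1} ∪ {ω | v ω i = -1}) = 1 := by
      rw [measure_union hdisj hB, (hrad i).1, (hrad i).2]
      rw [ENNReal.div_add_div_same, one_add_one_eq_two]
      exact ENNReal.div_self (by norm_num) (by norm_num)
    have hcompl : μ ({ω | v ω i = 1} ∪ {ω | v ω i = -1})ᶜ = 0 := by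
      rw [measure_compl (hA.union hB) (measure_ne_top μ _), hunion, measure_univ]
      simp
    filter_upwards [measure_eq_zero_iff_ae_notMem.mp hcompl] with ω hω
    simpa [Set.mem_union, Set.mem_setOf_eq, or_iff_not_imp_left] using hω
  have haenorm : ∀ᵐ ω ∂μ, ‖v ω‖ = Real.sqrt d := by
    filter_upwards [hae] with ω hω
    have h1 : ∀ i, v ω i ^ 2 = 1 := by
      intro i
      rcases hω i with h | h <;> rw [h] <;> norm_num
    have h2 : ∑ j, ‖v ω j‖ ^ 2 = (d : ℝ) := by
      simp [Real.norm_eq_abs, sq_abs, h1]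
    rw [EuclideanSpace.norm_eq, h2]
  -- integrability of components and products
  have hInti : ∀ i, Integrable (fun ω => v ω i) μ := by
    intro i
    refine Integrable.mono' (integrable_const (1:ℝ)) ((hmi i).aestronglyMeasurable) ?_
    filter_upwards [hae] with ω hω
    rcases hω i with h | h <;> simp [h]
  have hIntmul : ∀ i j, Integrable (fun ω => v ω i * v ω j) μ := by
    intro i j
    refine Integrable.mono' (integrable_const (1:ℝ))
      (((hmi i).mul (hmi j)).aestronglyMeasurable) ?_
    filter_upwards [hae] with ω hω
    rcases hω i with h | h <;> rcases hω j with h' | h' <;> simp [h, h']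
  -- mean zero
  have hEzero : ∀ i, ∫ ω, v ω i ∂μ = 0 := by
    intro i
    have hA : MeasurableSet {ω | v ω i = 1} := (hmi i) (measurableSet_singleton 1)
    have hB : MeasurableSet {ω | v ω i = -1} := (hmi i) (measurableSet_singleton (-1))
    have hcongr : (fun ω => v ω i) =ᵐ[μ]
        fun ω => Set.indicator {ω | v ω i = 1} (fun _ => (1:ℝ)) ω
          + Set.indicator {ω | v ω i = -1} (fun _ => (-1:ℝ)) ω := by
      filter_upwards [hae] with ω hω
      rcases hω i with h | h
      · rw [Set.indicator_of_mem (by exact h), Set.indicator_of_notMem (by simp [h]; norm_num)]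
        rw [h]; ring
      · rw [Set.indicator_of_notMem (by simp [h]; norm_num), Set.indicator_of_mem (by exact h)]
        rw [h]; ring
    rw [integral_congr_ae hcongr, integral_add ((integrable_const (1:ℝ)).indicator hA)
      ((integrable_const (-1:ℝ)).indicator hB), integral_indicator_const _ hA,
      integral_indicator_const _ hB]
    simp [measureReal_def, (hrad i).1, (hrad i).2, ENNReal.toReal_div]
  -- second moments
  have hEmul : ∀ i j, ∫ ω, v ω i * v ω j ∂μ = if i = j then 1 else 0 := by
    intro i j
    by_cases h : i = j
    · subst h
      rw [if_pos rfl]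
      have hcongr : (fun ω => v ω i * v ω i) =ᵐ[μ] fun _ => (1:ℝ) := by
        filter_upwards [hae] with ω hω
        rcases hω i with h | h <;> rw [h] <;> norm_num
      rw [integral_congr_ae hcongr]
      simp
    · rw [if_neg h]
      have hind : IndepFun (fun ω => v ω i) (fun ω => v ω j) μ := hindep.indepFun h
      have hm := hind.integral_mul_eq_mul_integral ((hmi i).aestronglyMeasurable) ((hmi j).aestronglyMeasurable)
      calc ∫ ω, v ω i * v ω j ∂μ = (∫ ω, v ω i ∂μ) * ∫ ω, v ω j ∂μ := by
            simpa [Pi.mul_apply] using hm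
        _ = 0 := by rw [hEzero, zero_mul]
  -- integrability of ⟪c, v⟫ • v
  have hIc : ∀ c : EuclideanSpace ℝ (Fin d), Integrable (fun ω => (⟪c, v ω⟫ : ℝ) • v ω) μ := by
    intro c
    refine Integrable.mono' (integrable_const (‖c‖ * Real.sqrt d * Real.sqrt d))
      (((Measurable.inner (𝕜 := ℝ) measurable_const hmeas).fun_smul hmeas).aestronglyMeasurable) ?_
    filter_upwards [haenorm] with ω hω
    rw [norm_smul, Real.norm_eq_abs]
    calc |⟪c, v ω⟫| * ‖v ω‖ ≤ (‖c‖ * ‖v ω‖) * ‖v ω‖ :=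
          mul_le_mul_of_nonneg_right (abs_real_inner_le_norm _ _) (norm_nonneg _)
      _ = ‖c‖ * Real.sqrt d * Real.sqrt d := by rw [hω]
  -- key expectation identity
  have hKey : ∀ c : EuclideanSpace ℝ (Fin d), (∫ ω, (⟪c, v ω⟫ : ℝ) • v ω ∂μ) = c := by
    intro c
    ext i
    have hcomm := (EuclideanSpace.proj (𝕜 := ℝ) i).integral_comp_comm (hIc c)
    have hlhs : (∫ ω, (⟪c, v ω⟫ : ℝ) • v ω ∂μ) i = ∫ ω, (⟪c, v ω⟫ : ℝ) * v ω i ∂μ := by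
      have h2 : (∫ ω, (⟪c, v ω⟫ : ℝ) • v ω ∂μ) i
          = (EuclideanSpace.proj (𝕜 := ℝ) i) (∫ ω, (⟪c, v ω⟫ : ℝ) • v ω ∂μ) := rfl
      rw [h2, ← hcomm]
      simp [PiLp.proj_apply, PiLp.smul_apply, smul_eq_mul]
    rw [hlhs]
    have hexp : ∀ ω, (⟪c, v ω⟫ : ℝ) * v ω i = ∑ j, c j * (v ω j * v ω i) := by
      intro ω
      rw [PiLp.inner_apply]
      simp only [RCLike.inner_apply, conj_trivial]
      rw [Finset.sum_mul]
      exact Finset.sum_congr rfl fun j _ => by ring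
    calc ∫ ω, (⟪c, v ω⟫ : ℝ) * v ω i ∂μ = ∫ ω, ∑ j, c j * (v ω j * v ω i) ∂μ := by
          exact integral_congr_ae (Filter.Eventually.of_forall fun ω => hexp ω)
      _ = ∑ j, ∫ ω, c j * (v ω j * v ω i) ∂μ :=
          integral_finset_sum _ fun j _ => (hIntmul j i).const_mul (c j)
      _ = ∑ j, c j * ∫ ω, v ω j * v ω i ∂μ := by
          exact Finset.sum_congr rfl fun j _ => integral_const_mul _ _
      _ = ∑ j, c j * (if j = i then 1 else 0) := by
          exact Finset.sum_congr rfl fun j _ => by rw [hEmul]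
      _ = c i := by simp
  -- Taylor remainder
  set R : Ω → ℝ := fun ω => (f (θ + ε • v ω) - f θ) / ε - ⟪w, v ω⟫ with hRdef
  have hRb : ∀ ω, |R ω| ≤ L / 2 * ε * ‖v ω‖ ^ 2 := by
    intro ω
    have h1 := taylor_smooth_bound f L hL hf hlip θ (ε • v ω)
    rw [← hwdef] at h1
    have h2 : R ω = (f (θ + ε • v ω) - f θ - ⟪w, ε • v ω⟫) / ε := by
      simp only [hRdef]
      rw [real_inner_smul_right]
      field_simp
    rw [h2, abs_div, abs_of_pos hε, div_le_iff₀ hε]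
    calc |f (θ + ε • v ω) - f θ - ⟪w, ε • v ω⟫| ≤ L / 2 * ‖ε • v ω‖ ^ 2 := h1
      _ = L / 2 * ε * ‖v ω‖ ^ 2 * ε := by
          rw [norm_smul, Real.norm_eq_abs, abs_of_pos hε, mul_pow]; ring
  have hrpow : (d : ℝ) ^ ((3:ℝ)/2) = (d : ℝ) * Real.sqrt d := by
    rw [show ((3:ℝ)/2) = 1 + 1/2 by norm_num,
      Real.rpow_add' (by positivity) (by norm_num), Real.rpow_one, Real.sqrt_eq_rpow]
  have hC : ∀ᵐ ω ∂μ, ‖R ω • v ω‖ ≤ ε * L * (d : ℝ) ^ ((3:ℝ)/2) / 2 := by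
    filter_upwards [haenorm] with ω hω
    rw [norm_smul, Real.norm_eq_abs]
    have h2 : ‖v ω‖ ^ 2 = (d : ℝ) := by rw [hω, Real.sq_sqrt (by positivity)]
    calc |R ω| * ‖v ω‖ ≤ (L / 2 * ε * ‖v ω‖ ^ 2) * ‖v ω‖ :=
          mul_le_mul_of_nonneg_right (hRb ω) (norm_nonneg _)
      _ = ε * L * ((d:ℝ) * Real.sqrt d) / 2 := by rw [h2, hω]; ring
      _ = ε * L * (d : ℝ) ^ ((3:ℝ)/2) / 2 := by rw [hrpow]
  have hI1 : Integrable (fun ω => R ω • v ω) μ := by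
    have hm : Measurable fun ω => R ω • v ω := by
      refine Measurable.fun_smul ?_ hmeas
      exact (((hf.continuous.measurable.comp
        ((hmeas.const_smul ε).const_add θ)).sub measurable_const).div_const ε).sub
        (Measurable.inner (𝕜 := ℝ) measurable_const hmeas)
    exact Integrable.mono' (integrable_const _) hm.aestronglyMeasurable hC
  have hpt : ∀ ω, ((f (θ + ε • v ω) - f θ) / ε) • v ω - (⟪wh, v ω⟫ : ℝ) • v ω + wh
      = (R ω • v ω + (⟪w - wh, v ω⟫ : ℝ) • v ω) + wh := by
    intro ω
    simp only [hRdef, inner_sub_left, sub_smul]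
    abel
  have hre : ∫ ω, (((f (θ + ε • v ω) - f θ) / ε) • v ω - (⟪wh, v ω⟫ : ℝ) • v ω + wh) ∂μ
      = (∫ ω, R ω • v ω ∂μ) + (w - wh) + wh := by
    have hadd1 : Integrable (fun ω => R ω • v ω + (⟪w - wh, v ω⟫ : ℝ) • v ω) μ :=
      hI1.add (hIc (w - wh))
    rw [integral_congr_ae (Filter.Eventually.of_forall hpt),
      integral_add hadd1 (integrable_const wh),
      integral_add hI1 (hIc (w - wh)), hKey, integral_const]
    simp
  rw [hre]
  have hfin : (∫ ω, R ω • v ω ∂μ) + (w - wh) + wh - w = ∫ ω, R ω • v ω ∂μ := by abel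
  rw [hfin]
  have hb := norm_integral_le_of_norm_le (integrable_const (ε * L * (d:ℝ) ^ ((3:ℝ)/2) / 2)) hC
  refine hb.trans ?_
  simp
end

section
/- Let f : ℝ^d → ℝ be L-smooth, let f̂ : ℝ^d → ℝ be differentiable, let ε > 0, let θ ∈ ℝ^d, and let v be a random vector in ℝ^d with independent Rademacher components. Then the mean squared error of the finite-difference control variate forward gradient h_{v,ε}(θ) = ((f(θ+εv) − f(θ))/ε) v − (∇f̂(θ)·v)v + ∇f̂(θ) satisfies E[‖h_{v,ε}(θ) − ∇f(θ)‖²] ≤ ε² L² d³ / 4 + 2 (d − 1) (ε L d^{3/2} / 2) ‖∇f(θ) − ∇f̂(θ)‖ + (d − 1) ‖∇f(θ) − ∇f̂(θ)‖². -/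
open MeasureTheory ProbabilityTheory
open scoped RealInnerProductSpace

lemma quad_bound {E : Type*} [NormedAddCommGroup E] [InnerProductSpace ℝ E] [CompleteSpace E]
    (f : E → ℝ) (L : ℝ) (hf : Differentiable ℝ f)
    (hlip : ∀ x y, ‖gradient f x - gradient f y‖ ≤ L * ‖x - y‖)
    (y u : E) : |f (y + u) - f y - ⟪gradient f y, u⟫| ≤ L / 2 * ‖u‖ ^ 2 := by
  set c : ℝ := ⟪gradient f y, u⟫ with hc
  set g : ℝ → ℝ := fun t => f (y + t • u) - (f y + t * c) with hg
  have hline : ∀ t : ℝ, HasDerivAt (fun s : ℝ => y + s • u) u t := by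
    intro t
    simpa using ((hasDerivAt_id t).smul_const u).const_add y
  have hcomp : ∀ t : ℝ, HasDerivAt (fun s => f (y + s • u)) ⟪gradient f (y + t • u), u⟫ t := by
    intro t
    have h1 : HasFDerivAt f (InnerProductSpace.toDual ℝ E (gradient f (y + t • u))) (y + t • u) :=
      (hf _).hasGradientAt.hasFDerivAt
    have h3 := h1.comp_hasDerivAt t (hline t)
    rw [InnerProductSpace.toDual_apply_apply] at h3
    exact h3
  have hg' : ∀ t : ℝ, HasDerivAt g (⟪gradient f (y + t • u), u⟫ - c) t := by
    intro t
    have h2 : HasDerivAt (fun s : ℝ => f y + s * c) c t := by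
      simpa using ((hasDerivAt_id t).mul_const c).const_add (f y)
    exact (hcomp t).sub h2
  set B : ℝ → ℝ := fun t => L * ‖u‖ ^ 2 / 2 * t ^ 2 with hB
  have hB' : ∀ t : ℝ, HasDerivAt B (L * ‖u‖ ^ 2 * t) t := by
    intro t
    have := (hasDerivAt_pow 2 t).const_mul (L * ‖u‖ ^ 2 / 2)
    refine this.congr_deriv ?_
    ring
  have bound : ∀ t ∈ Set.Ico (0:ℝ) 1, ‖⟪gradient f (y + t • u), u⟫ - c‖ ≤ L * ‖u‖ ^ 2 * t := by
    intro t ht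
    rw [hc, Real.norm_eq_abs, ← inner_sub_left]
    calc |⟪gradient f (y + t • u) - gradient f y, u⟫|
        ≤ ‖gradient f (y + t • u) - gradient f y‖ * ‖u‖ := abs_real_inner_le_norm _ _
      _ ≤ (L * ‖y + t • u - y‖) * ‖u‖ := by
          have := hlip (y + t • u) y
          exact mul_le_mul_of_nonneg_right this (norm_nonneg u)
      _ = L * ‖u‖ ^ 2 * t := by
          have : y + t • u - y = t • u := by abel
          rw [this, norm_smul, Real.norm_eq_abs, abs_of_nonneg ht.1]
          ring
  have key := image_norm_le_of_norm_deriv_right_le_deriv_boundary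
    (f := g) (f' := fun t => ⟪gradient f (y + t • u), u⟫ - c) (a := 0) (b := 1)
    (fun t _ => ((hg' t).continuousAt).continuousWithinAt)
    (fun t _ => (hg' t).hasDerivWithinAt)
    (by simp [hg, hB]) hB' bound
  have h1 := key (Set.right_mem_Icc.2 zero_le_one)
  have hg1 : g 1 = f (y + u) - f y - c := by simp [hg]; ring
  have hB1 : B 1 = L * ‖u‖ ^ 2 / 2 := by simp [hB]
  rw [hg1, hB1, Real.norm_eq_abs] at h1
  linarith [h1]

lemma rademacher_ae {Ω : Type*} [MeasurableSpace Ω] {μ : Measure Ω} [IsProbabilityMeasure μ]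
    (X : Ω → ℝ) (hX : Measurable X)
    (h1 : μ {ω | X ω = 1} = 1/2) (h2 : μ {ω | X ω = -1} = 1/2) :
    ∀ᵐ ω ∂μ, X ω = 1 ∨ X ω = -1 := by
  have hA : MeasurableSet {ω | X ω = 1} := hX (measurableSet_singleton 1)
  have hB : MeasurableSet {ω | X ω = -1} := hX (measurableSet_singleton (-1))
  have hdisj : Disjoint {ω | X ω = 1} {ω | X ω = -1} := by
    rw [Set.disjoint_left]
    rintro ω hω1 hω2
    simp only [Set.mem_setOf_eq] at hω1 hω2
    rw [hω1] at hω2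
    norm_num at hω2
  have hu : μ ({ω | X ω = 1} ∪ {ω | X ω = -1}) = 1 := by
    rw [measure_union hdisj hB, h1, h2]
    rw [ENNReal.div_add_div_same]
    rw [one_add_one_eq_two]
    exact ENNReal.div_self (two_ne_zero) (ENNReal.ofNat_ne_top)
  have hc := measure_compl (hA.union hB) (measure_ne_top μ _)
  rw [hu, measure_univ, tsub_self] at hc
  have hset : {ω | ¬(X ω = 1 ∨ X ω = -1)} = ({ω | X ω = 1} ∪ {ω | X ω = -1})ᶜ := by
    ext ω; simp [not_or]
  rw [ae_iff, hset]
  exact hc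

lemma rademacher_integral {Ω : Type*} [MeasurableSpace Ω] {μ : Measure Ω} [IsProbabilityMeasure μ]
    (X : Ω → ℝ) (hX : Measurable X)
    (h1 : μ {ω | X ω = 1} = 1/2) (h2 : μ {ω | X ω = -1} = 1/2) :
    ∫ ω, X ω ∂μ = 0 := by
  have hA : MeasurableSet {ω | X ω = 1} := hX (measurableSet_singleton 1)
  have hB : MeasurableSet {ω | X ω = -1} := hX (measurableSet_singleton (-1))
  have hae := rademacher_ae X hX h1 h2
  have heq : X =ᵐ[μ] fun ω => ({ω | X ω = 1}.indicator (fun _ => (1:ℝ)) ω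
      - {ω | X ω = -1}.indicator (fun _ => (1:ℝ)) ω) := by
    filter_upwards [hae] with ω hω
    rcases hω with h | h
    · have : ω ∉ {ω | X ω = -1} := by simp [h]; norm_num
      simp [Set.indicator_of_mem, Set.indicator_of_notMem, h, this]
    · have : ω ∉ {ω | X ω = 1} := by simp [h]; norm_num
      simp [Set.indicator_of_mem, Set.indicator_of_notMem, h, this]
  rw [integral_congr_ae heq]
  rw [integral_sub ((integrable_const (1:ℝ)).indicator hA) ((integrable_const (1:ℝ)).indicator hB)]
  rw [integral_indicator_const _ hA, integral_indicator_const _ hB, measureReal_def, measureReal_def, h1, h2]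
  simp

set_option maxHeartbeats 2000000 in
/-- **Mean squared error bound for the finite-difference control variate forward
gradient.**  If `f` is `L`-smooth, `f̂` differentiable, `ε > 0`, and `v` has independent
Rademacher components, then for
`h_{v,ε}(θ) = ((f(θ+εv) − f(θ))/ε) v − (∇f̂(θ)·v)v + ∇f̂(θ)` we have
`E[‖h_{v,ε}(θ) − ∇f(θ)‖²] ≤ ε²L²d³/4 + 2(d−1)(εLd^{3/2}/2)‖∇f(θ) − ∇f̂(θ)‖
+ (d−1)‖∇f(θ) − ∇f̂(θ)‖²`. -/
theorem fd_cv_forward_gradient_mse_bound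
    {Ω : Type*} [MeasurableSpace Ω] {μ : Measure Ω} [IsProbabilityMeasure μ]
    {d : ℕ} (f fhat : EuclideanSpace ℝ (Fin d) → ℝ) (L : ℝ) (hL : 0 ≤ L)
    (hf : Differentiable ℝ f)
    (hlip : ∀ x y, ‖gradient f x - gradient f y‖ ≤ L * ‖x - y‖)
    (hfhat : Differentiable ℝ fhat)
    (ε : ℝ) (hε : 0 < ε) (θ : EuclideanSpace ℝ (Fin d))
    (v : Ω → EuclideanSpace ℝ (Fin d)) (hmeas : Measurable v)
    (hindep : iIndepFun (fun i ω => v ω i) μ)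
    (hrad : ∀ i, μ {ω | v ω i = 1} = 1/2 ∧ μ {ω | v ω i = -1} = 1/2) :
    ∫ ω, ‖(((f (θ + ε • v ω) - f θ) / ε) • v ω - ⟪gradient fhat θ, v ω⟫ • v ω
          + gradient fhat θ) - gradient f θ‖ ^ 2 ∂μ
      ≤ ε ^ 2 * L ^ 2 * (d : ℝ) ^ 3 / 4
        + 2 * ((d : ℝ) - 1) * (ε * L * (d : ℝ) ^ ((3 : ℝ) / 2) / 2)
            * ‖gradient f θ - gradient fhat θ‖
        + ((d : ℝ) - 1) * ‖gradient f θ - gradient fhat θ‖ ^ 2 := by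
  classical
  have hvi : ∀ i, Measurable fun ω => v ω i := fun i => (measurable_pi_apply i).comp ((WithLp.measurable_ofLp _ _).comp hmeas)
  have hae : ∀ᵐ ω ∂μ, ∀ i, v ω i = 1 ∨ v ω i = -1 := by
    rw [MeasureTheory.ae_all_iff]
    intro i
    exact rademacher_ae _ (hvi i) (hrad i).1 (hrad i).2
  rcases Nat.eq_zero_or_pos d with hd0 | hdpos
  · subst hd0
    haveI : Subsingleton (EuclideanSpace ℝ (Fin 0)) :=
      ⟨fun a b => by ext i; exact i.elim0⟩
    have hz : ∀ x : EuclideanSpace ℝ (Fin 0), ‖x‖ = 0 := fun x => by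
      rw [Subsingleton.elim x 0, norm_zero]
    simp only [hz, Nat.cast_zero]
    rw [Real.zero_rpow (by norm_num)]
    norm_num
  -- main case
  have hdR : (0:ℝ) < (d:ℝ) := by exact_mod_cast hdpos
  have hd1 : (1:ℝ) ≤ (d:ℝ) := by exact_mod_cast hdpos
  set G := gradient f θ with hG
  set Gh := gradient fhat θ with hGh
  set D := G - Gh with hDdef
  set q : Ω → ℝ := fun ω => ⟪D, v ω⟫ with hqdef
  set a : Ω → ℝ := fun ω => (f (θ + ε • v ω) - f θ) / ε - ⟪G, v ω⟫ with hadef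
  set A := ε * L * (d:ℝ) / 2 with hAdef
  set Q := ‖D‖ * Real.sqrt (d:ℝ) with hQdef
  have hAnn : 0 ≤ A := by
    rw [hAdef]; positivity
  have hQnn : 0 ≤ Q := by
    rw [hQdef]; positivity
  have hnv : ∀ ω, (∀ i, v ω i = 1 ∨ v ω i = -1) → ‖v ω‖^2 = (d:ℝ) := by
    intro ω hω
    have h1 : ‖v ω‖^2 = ∑ i, v ω i * v ω i := by
      rw [EuclideanSpace.norm_sq_eq]
      refine Finset.sum_congr rfl fun i _ => ?_
      rw [Real.norm_eq_abs, sq_abs, sq]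
    rw [h1]
    have h2 : ∀ i, v ω i * v ω i = 1 := fun i => by
      rcases hω i with h | h <;> rw [h] <;> norm_num
    simp [h2]
  have hnvnorm : ∀ ω, (∀ i, v ω i = 1 ∨ v ω i = -1) → ‖v ω‖ = Real.sqrt (d:ℝ) := by
    intro ω hω
    rw [show ((d:ℝ)) = ‖v ω‖^2 from (hnv ω hω).symm, Real.sqrt_sq (norm_nonneg _)]
  -- bound on a
  have haBound : ∀ᵐ ω ∂μ, |a ω| ≤ A := by
    filter_upwards [hae] with ω hω
    have h1 := quad_bound f L hf hlip θ (ε • v ω)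
    rw [← hG] at h1
    have h2 : ⟪G, ε • v ω⟫ = ε * ⟪G, v ω⟫ := real_inner_smul_right _ _ _
    have h3 : ‖ε • v ω‖^2 = ε^2 * (d:ℝ) := by
      rw [norm_smul, mul_pow, Real.norm_eq_abs, sq_abs, hnv ω hω]
    have h4 : a ω = (f (θ + ε • v ω) - f θ - ⟪G, ε • v ω⟫) / ε := by
      rw [h2, hadef]
      field_simp
    rw [h4, abs_div, abs_of_pos hε]
    rw [h3] at h1
    calc |f (θ + ε • v ω) - f θ - ⟪G, ε • v ω⟫| / ε ≤ (L / 2 * (ε^2 * (d:ℝ))) / ε := by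
          gcongr
      _ = A := by
          rw [hAdef]; field_simp
  -- bound on q
  have hqBound : ∀ᵐ ω ∂μ, |q ω| ≤ Q := by
    filter_upwards [hae] with ω hω
    calc |q ω| ≤ ‖D‖ * ‖v ω‖ := abs_real_inner_le_norm _ _
      _ = Q := by rw [hnvnorm ω hω, hQdef]
  -- algebraic identity
  have hXeq : ∀ ω, (((f (θ + ε • v ω) - f θ) / ε) • v ω - ⟪Gh, v ω⟫ • v ω + Gh) - G
      = a ω • v ω + (q ω • v ω - D) := by
    intro ω
    have hq' : q ω = ⟪G, v ω⟫ - ⟪Gh, v ω⟫ := inner_sub_left _ _ _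
    rw [hadef]
    rw [hq', hDdef]
    simp only [sub_smul]
    abel
  have hnormEq : ∀ ω, (∀ i, v ω i = 1 ∨ v ω i = -1) →
      ‖a ω • v ω + (q ω • v ω - D)‖^2
        = (d:ℝ) * a ω^2 + 2*((d:ℝ)-1)*(a ω * q ω) + ((d:ℝ)-2)*(q ω)^2 + ‖D‖^2 := by
    intro ω hω
    have hv2 : ‖v ω‖^2 = (d:ℝ) := hnv ω hω
    have hvv : ⟪v ω, v ω⟫ = (d:ℝ) := by rw [real_inner_self_eq_norm_sq, hv2]
    have hvD : ⟪v ω, D⟫ = q ω := by rw [real_inner_comm, hqdef]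
    have e1 : ‖a ω • v ω‖^2 = a ω^2 * (d:ℝ) := by
      rw [norm_smul, mul_pow, Real.norm_eq_abs, sq_abs, hv2]
    have e2 : ⟪a ω • v ω, q ω • v ω - D⟫ = a ω * (q ω * (d:ℝ) - q ω) := by
      rw [real_inner_smul_left, inner_sub_right, real_inner_smul_right, hvv, hvD]
    have e3 : ‖q ω • v ω - D‖^2 = q ω^2 * (d:ℝ) - 2*(q ω * q ω) + ‖D‖^2 := by
      rw [norm_sub_sq_real, real_inner_smul_left, hvD, norm_smul, mul_pow, Real.norm_eq_abs,
        sq_abs, hv2]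
    rw [norm_add_sq_real, e1, e2, e3]
    ring
  -- measurability
  have ham : Measurable a := by
    apply Measurable.sub
    · exact ((hf.continuous.measurable.comp (measurable_const.add (hmeas.const_smul ε))).sub
        measurable_const).div_const ε
    · exact measurable_const.inner hmeas
  have hqm : Measurable q := measurable_const.inner hmeas
  have hXm : Measurable fun ω => ‖a ω • v ω + (q ω • v ω - D)‖^2 :=
    (((ham.smul hmeas).add ((hqm.smul hmeas).sub measurable_const)).norm).pow measurable_const
  -- integrability
  set K := A * Real.sqrt (d:ℝ) + (Q * Real.sqrt (d:ℝ) + ‖D‖) with hKdef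
  have hXb : ∀ᵐ ω ∂μ, ‖a ω • v ω + (q ω • v ω - D)‖ ≤ K := by
    filter_upwards [haBound, hqBound, hae] with ω h1 h2 h3
    have hnvω : ‖v ω‖ = Real.sqrt (d:ℝ) := hnvnorm ω h3
    calc ‖a ω • v ω + (q ω • v ω - D)‖ ≤ ‖a ω • v ω‖ + ‖q ω • v ω - D‖ := norm_add_le _ _
      _ ≤ ‖a ω • v ω‖ + (‖q ω • v ω‖ + ‖D‖) := by gcongr; exact norm_sub_le _ _
      _ = |a ω| * Real.sqrt (d:ℝ) + (|q ω| * Real.sqrt (d:ℝ) + ‖D‖) := by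
          rw [norm_smul, norm_smul, hnvω, Real.norm_eq_abs, Real.norm_eq_abs]
      _ ≤ K := by
          rw [hKdef]
          gcongr <;> assumption
  have hXint : Integrable (fun ω => ‖a ω • v ω + (q ω • v ω - D)‖^2) μ := by
    refine Integrable.mono' (integrable_const (K^2)) hXm.aestronglyMeasurable ?_
    filter_upwards [hXb] with ω h
    rw [Real.norm_eq_abs, abs_of_nonneg (by positivity)]
    exact pow_le_pow_left₀ (norm_nonneg _) h 2
  have hq2int : Integrable (fun ω => (q ω)^2) μ := by
    refine Integrable.mono' (integrable_const (Q^2)) ((hqm.pow measurable_const).aestronglyMeasurable) ?_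
    filter_upwards [hqBound] with ω h
    rw [Real.norm_eq_abs, abs_of_nonneg (by positivity)]
    calc (q ω)^2 = |q ω|^2 := (sq_abs _).symm
      _ ≤ Q^2 := pow_le_pow_left₀ (abs_nonneg _) h 2
  -- pointwise a.e. bound
  have hpb : ∀ᵐ ω ∂μ, ‖a ω • v ω + (q ω • v ω - D)‖^2
      ≤ ((d:ℝ)-2) * (q ω)^2 + ((d:ℝ) * A^2 + 2*((d:ℝ)-1)*(A*Q) + ‖D‖^2) := by
    filter_upwards [haBound, hqBound, hae] with ω h1 h2 h3
    rw [hnormEq ω h3]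
    have ha2 : a ω^2 ≤ A^2 := by
      calc a ω^2 = |a ω|^2 := (sq_abs _).symm
        _ ≤ A^2 := pow_le_pow_left₀ (abs_nonneg _) h1 2
    have haq : a ω * q ω ≤ A * Q := by
      calc a ω * q ω ≤ |a ω * q ω| := le_abs_self _
        _ = |a ω| * |q ω| := abs_mul _ _
        _ ≤ A * Q := mul_le_mul h1 h2 (abs_nonneg _) hAnn
    have hd1' : (0:ℝ) ≤ (d:ℝ) - 1 := by linarith
    nlinarith [mul_le_mul_of_nonneg_left ha2 hdR.le, mul_le_mul_of_nonneg_left haq hd1']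
  -- second moment of q
  have hvij_int : ∀ i j : Fin d, Integrable (fun ω => v ω i * v ω j) μ := by
    intro i j
    refine Integrable.mono' (integrable_const 1) (((hvi i).mul (hvi j)).aestronglyMeasurable) ?_
    filter_upwards [hae] with ω hω
    rw [Real.norm_eq_abs, abs_mul]
    rcases hω i with h | h <;> rcases hω j with h' | h' <;> rw [h, h'] <;> norm_num
  have hvv_int : ∀ i j : Fin d, i ≠ j → ∫ ω, v ω i * v ω j ∂μ = 0 := by
    intro i j hij
    have hind : IndepFun (fun ω => v ω i) (fun ω => v ω j) μ := hindep.indepFun hij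
    have := hind.integral_fun_mul_eq_mul_integral ((hvi i).aestronglyMeasurable) ((hvi j).aestronglyMeasurable)
    have heqf : ∫ ω, v ω i * v ω j ∂μ = (∫ ω, v ω i ∂μ) * ∫ ω, v ω j ∂μ := this
    rw [heqf, rademacher_integral _ (hvi i) (hrad i).1 (hrad i).2, zero_mul]
  have hvv_sq : ∀ i : Fin d, ∫ ω, v ω i * v ω i ∂μ = 1 := by
    intro i
    have heq1 : (fun ω => v ω i * v ω i) =ᵐ[μ] fun _ => (1:ℝ) := by
      filter_upwards [hae] with ω hω
      rcases hω i with h | h <;> rw [h] <;> norm_num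
    rw [integral_congr_ae heq1]
    simp
  have hq_eq : ∀ ω, q ω = ∑ i, D i * v ω i := by
    intro ω
    simp [hqdef, PiLp.inner_apply, RCLike.inner_apply, mul_comm]
  have hDnorm : ‖D‖^2 = ∑ i, (D i)^2 := by
    rw [EuclideanSpace.norm_sq_eq]
    refine Finset.sum_congr rfl fun i _ => ?_
    rw [Real.norm_eq_abs, sq_abs]
  have hEq2 : ∫ ω, (q ω)^2 ∂μ = ‖D‖^2 := by
    have hsq : ∀ ω, (q ω)^2 = ∑ i, ∑ j, (D i * D j) * (v ω i * v ω j) := by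
      intro ω
      rw [hq_eq, sq, Finset.sum_mul_sum]
      refine Finset.sum_congr rfl fun i _ => Finset.sum_congr rfl fun j _ => by ring
    calc ∫ ω, (q ω)^2 ∂μ = ∫ ω, ∑ i, ∑ j, (D i * D j) * (v ω i * v ω j) ∂μ :=
          integral_congr_ae (Filter.Eventually.of_forall hsq)
      _ = ∑ i, ∑ j, ∫ ω, (D i * D j) * (v ω i * v ω j) ∂μ := by
          rw [integral_finset_sum _ (fun i _ =>
            integrable_finset_sum _ (fun j _ => (hvij_int i j).const_mul _))]
          exact Finset.sum_congr rfl fun i _ =>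
            integral_finset_sum _ (fun j _ => (hvij_int i j).const_mul _)
      _ = ∑ i, ∑ j, (D i * D j) * (if i = j then 1 else 0) := by
          refine Finset.sum_congr rfl fun i _ => Finset.sum_congr rfl fun j _ => ?_
          rw [integral_const_mul]
          by_cases hij : i = j
          · subst hij; rw [if_pos rfl, hvv_sq i]
          · rw [if_neg hij, hvv_int i j hij]
      _ = ∑ i, (D i)^2 := by
          refine Finset.sum_congr rfl fun i _ => ?_
          simp [Finset.sum_ite_eq, sq]
      _ = ‖D‖^2 := hDnorm.symm
  -- assemble
  have hd32 : (d:ℝ)^((3:ℝ)/2) = (d:ℝ) * Real.sqrt (d:ℝ) := by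
    rw [show (3:ℝ)/2 = 1 + 1/2 by norm_num, Real.rpow_add hdR, Real.rpow_one,
      ← Real.sqrt_eq_rpow]
  calc ∫ ω, ‖(((f (θ + ε • v ω) - f θ) / ε) • v ω - ⟪Gh, v ω⟫ • v ω + Gh) - G‖ ^ 2 ∂μ
      = ∫ ω, ‖a ω • v ω + (q ω • v ω - D)‖^2 ∂μ :=
        integral_congr_ae (Filter.Eventually.of_forall fun ω =>
          congrArg (fun z => ‖z‖^2) (hXeq ω))
    _ ≤ ∫ ω, (((d:ℝ)-2) * (q ω)^2 + ((d:ℝ) * A^2 + 2*((d:ℝ)-1)*(A*Q) + ‖D‖^2)) ∂μ :=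
        integral_mono_ae hXint ((hq2int.const_mul _).add (integrable_const _)) hpb
    _ = ((d:ℝ)-2) * (∫ ω, (q ω)^2 ∂μ) + ((d:ℝ) * A^2 + 2*((d:ℝ)-1)*(A*Q) + ‖D‖^2) := by
        rw [integral_add (hq2int.const_mul _) (integrable_const _), integral_const_mul,
          integral_const, probReal_univ, one_smul]
    _ = ((d:ℝ)-2) * ‖D‖^2 + ((d:ℝ) * A^2 + 2*((d:ℝ)-1)*(A*Q) + ‖D‖^2) := by rw [hEq2]
    _ = ε ^ 2 * L ^ 2 * (d : ℝ) ^ 3 / 4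
        + 2 * ((d : ℝ) - 1) * (ε * L * (d : ℝ) ^ ((3 : ℝ) / 2) / 2) * ‖D‖
        + ((d : ℝ) - 1) * ‖D‖ ^ 2 := by
        rw [hd32, hAdef, hQdef]
        ring
end

section
/- Let f : ℝ^d → ℝ be differentiable, let f̂ : ℝ^d → ℝ be differentiable, let ε > 0, let θ ∈ ℝ^d, and let v be a random vector in ℝ^d with independent Rademacher components. Define D_{v,ε}(θ) = (f(θ + εv) − f(θ))/ε − ∇f(θ)·v and h_{v,ε}(θ) = ((f(θ+εv) − f(θ))/ε) v − (∇f̂(θ)·v)v + ∇f̂(θ). Then the exact mean-squared-error decomposition holds: E[‖h_{v,ε}(θ) − ∇f(θ)‖²] = d · E[D_{v,ε}(θ)²] + 2 (d − 1) E[D_{v,ε}(θ) v] · (∇f(θ) − ∇f̂(θ)) + (d − 1) ‖∇f(θ) − ∇f̂(θ)‖². -/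
open MeasureTheory ProbabilityTheory
open scoped RealInnerProductSpace

private lemma rad_integrable_comp
    {Ω : Type*} [MeasurableSpace Ω] {μ : Measure Ω} [IsProbabilityMeasure μ]
    {d : ℕ} {v : Ω → EuclideanSpace ℝ (Fin d)} (hmeas : Measurable v)
    (hae : ∀ᵐ ω ∂μ, ∀ i, v ω i = 1 ∨ v ω i = -1)
    {F : Type*} [NormedAddCommGroup F] [MeasurableSpace F] [BorelSpace F]
    [SecondCountableTopology F]
    (φ : EuclideanSpace ℝ (Fin d) → F) (hφ : Continuous φ) :
    Integrable (fun ω => φ (v ω)) μ := by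
  have hK : ({x : EuclideanSpace ℝ (Fin d) | ∀ i, x i = 1 ∨ x i = -1}).Finite := by
    have h : {x : EuclideanSpace ℝ (Fin d) | ∀ i, x i = 1 ∨ x i = -1} ⊆
        (WithLp.toLp 2) '' Set.univ.pi (fun _ : Fin d => ({1, -1} : Set ℝ)) := by
      intro x hx
      exact ⟨x.ofLp, fun i _ => by simpa using hx i, by simp⟩
    exact Set.Finite.subset ((Set.Finite.pi (fun i => (Set.finite_singleton (-1:ℝ)).insert 1)).image _) h
  obtain ⟨C, hC⟩ := hK.isCompact.exists_bound_of_continuousOn hφ.continuousOn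
  refine ⟨(hφ.measurable.comp hmeas).aestronglyMeasurable, ?_⟩
  apply HasFiniteIntegral.of_bounded (C := C)
  filter_upwards [hae] with ω hω
  exact hC _ hω

/-- **Exact mean-squared-error decomposition for the finite-difference control variate
forward gradient.**  For differentiable `f`, `f̂`, `ε > 0`, and `v` with independent
Rademacher components, writing `D_{v,ε}(θ) = (f(θ+εv) − f(θ))/ε − ∇f(θ)·v` and
`h_{v,ε}(θ) = ((f(θ+εv) − f(θ))/ε) v − (∇f̂(θ)·v)v + ∇f̂(θ)`, we have
`E[‖h_{v,ε}(θ) − ∇f(θ)‖²] = d E[D_{v,ε}(θ)²]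
+ 2(d−1) E[D_{v,ε}(θ) v] · (∇f(θ) − ∇f̂(θ)) + (d−1)‖∇f(θ) − ∇f̂(θ)‖²`. -/
theorem fd_cv_forward_gradient_mse_decomposition
    {Ω : Type*} [MeasurableSpace Ω] {μ : Measure Ω} [IsProbabilityMeasure μ]
    {d : ℕ} (f fhat : EuclideanSpace ℝ (Fin d) → ℝ)
    (hf : Differentiable ℝ f) (hfhat : Differentiable ℝ fhat)
    (ε : ℝ) (hε : 0 < ε) (θ : EuclideanSpace ℝ (Fin d))
    (v : Ω → EuclideanSpace ℝ (Fin d)) (hmeas : Measurable v)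
    (hindep : iIndepFun (fun i ω => v ω i) μ)
    (hrad : ∀ i, μ {ω | v ω i = 1} = 1/2 ∧ μ {ω | v ω i = -1} = 1/2) :
    ∫ ω, ‖(((f (θ + ε • v ω) - f θ) / ε) • v ω - ⟪gradient fhat θ, v ω⟫ • v ω
          + gradient fhat θ) - gradient f θ‖ ^ 2 ∂μ
      = (d : ℝ) * ∫ ω, ((f (θ + ε • v ω) - f θ) / ε - ⟪gradient f θ, v ω⟫) ^ 2 ∂μ
        + 2 * ((d : ℝ) - 1)
            * ⟪∫ ω, ((f (θ + ε • v ω) - f θ) / ε - ⟪gradient f θ, v ω⟫) • v ω ∂μ,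
                gradient f θ - gradient fhat θ⟫
        + ((d : ℝ) - 1) * ‖gradient f θ - gradient fhat θ‖ ^ 2 := by
  classical
  have hcont_i : ∀ i : Fin d, Continuous (fun x : EuclideanSpace ℝ (Fin d) => x i) :=
    fun i => (EuclideanSpace.proj i).continuous
  have hcm : ∀ i, Measurable fun ω => v ω i := fun i => (hcont_i i).measurable.comp hmeas
  have hA : ∀ i, MeasurableSet {ω | v ω i = 1} :=
    fun i => (hcm i) (measurableSet_singleton 1)
  have hB : ∀ i, MeasurableSet {ω | v ω i = -1} :=
    fun i => (hcm i) (measurableSet_singleton (-1))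
  have hae : ∀ᵐ ω ∂μ, ∀ i, v ω i = 1 ∨ v ω i = -1 := by
    rw [ae_all_iff]
    intro i
    have hdisj : Disjoint {ω | v ω i = 1} {ω | v ω i = -1} := by
      rw [Set.disjoint_left]
      rintro ω h1 h2
      simp only [Set.mem_setOf_eq] at h1 h2
      rw [h1] at h2; norm_num at h2
    have hU : μ ({ω | v ω i = 1} ∪ {ω | v ω i = -1}) = 1 := by
      rw [measure_union hdisj (hB i), (hrad i).1, (hrad i).2, ENNReal.add_halves]
    have hcompl : μ ({ω | v ω i = 1} ∪ {ω | v ω i = -1})ᶜ = 0 := by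
      rw [measure_compl ((hA i).union (hB i)) (measure_ne_top μ _), measure_univ, hU, tsub_self]
    refine measure_mono_null ?_ hcompl
    intro ω hω
    simp only [Set.mem_compl_iff, Set.mem_union, Set.mem_setOf_eq] at *
    tauto
  set g := gradient f θ with hgdef
  set gh := gradient fhat θ with hghdef
  set w := g - gh with hwdef
  set D : Ω → ℝ := fun ω => (f (θ + ε • v ω) - f θ) / ε - ⟪g, v ω⟫ with hDdef
  set s : Ω → ℝ := fun ω => ⟪w, v ω⟫ with hsdef
  -- continuity of the relevant functions of v
  have hfc : Continuous f := hf.continuous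
  have hφD : Continuous (fun x : EuclideanSpace ℝ (Fin d) =>
      (f (θ + ε • x) - f θ) / ε - ⟪g, x⟫) := by
    have h2 : Continuous (fun x : EuclideanSpace ℝ (Fin d) => ⟪g, x⟫) :=
      continuous_const.inner continuous_id
    fun_prop
  have hφs : Continuous (fun x : EuclideanSpace ℝ (Fin d) => ⟪w, x⟫) :=
    continuous_const.inner continuous_id
  -- integrability
  have iD2 : Integrable (fun ω => D ω ^ 2) μ :=
    rad_integrable_comp hmeas hae
      (fun x => ((f (θ + ε • x) - f θ) / ε - ⟪g, x⟫) ^ 2) (hφD.pow 2)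
  have iDs : Integrable (fun ω => D ω * s ω) μ :=
    rad_integrable_comp hmeas hae
      (fun x => ((f (θ + ε • x) - f θ) / ε - ⟪g, x⟫) * ⟪w, x⟫) (hφD.mul hφs)
  have is2 : Integrable (fun ω => s ω ^ 2) μ :=
    rad_integrable_comp hmeas hae (fun x => ⟪w, x⟫ ^ 2) (hφs.pow 2)
  have iDv : Integrable (fun ω => D ω • v ω) μ :=
    rad_integrable_comp hmeas hae
      (fun x => ((f (θ + ε • x) - f θ) / ε - ⟪g, x⟫) • x) (hφD.smul continuous_id)
  have ivi : ∀ i, Integrable (fun ω => v ω i) μ := fun i =>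
    rad_integrable_comp hmeas hae (fun x => x i) (hcont_i i)
  have ivij : ∀ i j : Fin d, Integrable (fun ω => v ω i * v ω j) μ := fun i j =>
    rad_integrable_comp hmeas hae (fun x => x i * x j) ((hcont_i i).mul (hcont_i j))
  have iwij : ∀ i j : Fin d, Integrable (fun ω => (w i * w j) * (v ω i * v ω j)) μ := fun i j =>
    (ivij i j).const_mul _
  -- pointwise identity
  have hpt : ∀ᵐ ω ∂μ,
      ‖(((f (θ + ε • v ω) - f θ) / ε) • v ω - ⟪gh, v ω⟫ • v ω + gh) - g‖ ^ 2
        = (d : ℝ) * D ω ^ 2 + 2 * ((d : ℝ) - 1) * (D ω * s ω)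
          + ((d : ℝ) - 2) * s ω ^ 2 + ‖w‖ ^ 2 := by
    filter_upwards [hae] with ω hω
    have hnv : ‖v ω‖ ^ 2 = (d : ℝ) := by
      rw [← real_inner_self_eq_norm_sq]
      simp only [PiLp.inner_apply, RCLike.inner_apply, conj_trivial]
      rw [Finset.sum_congr rfl (fun i _ => show v ω i * v ω i = 1 by
        rcases hω i with h | h <;> rw [h] <;> norm_num)]
      simp
    have hvec : (((f (θ + ε • v ω) - f θ) / ε) • v ω - ⟪gh, v ω⟫ • v ω + gh) - g
        = (D ω + s ω) • v ω - w := by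
      rw [hDdef, hsdef, hwdef]
      simp only [inner_sub_left]
      module
    have hsw : ⟪v ω, w⟫ = s ω := real_inner_comm w (v ω)
    rw [hvec, norm_sub_sq_real, real_inner_smul_left, norm_smul, Real.norm_eq_abs,
      mul_pow, sq_abs, hnv, hsw]
    ring
  -- mean of coordinates is zero
  have hmean : ∀ i, ∫ ω, v ω i ∂μ = 0 := by
    intro i
    have heq : (fun ω => v ω i) =ᵐ[μ]
        fun ω => Set.indicator {ω | v ω i = 1} (fun _ => (1:ℝ)) ω
          - Set.indicator {ω | v ω i = -1} (fun _ => (1:ℝ)) ω := by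
      filter_upwards [hae] with ω hω
      rcases hω i with h | h
      · rw [Set.indicator_of_mem (by exact h), Set.indicator_of_notMem (by
          simp only [Set.mem_setOf_eq, h]; norm_num)]
        rw [h]; norm_num
      · rw [Set.indicator_of_notMem (by
          simp only [Set.mem_setOf_eq, h]; norm_num), Set.indicator_of_mem (by exact h)]
        rw [h]; norm_num
    rw [integral_congr_ae heq,
      integral_sub ((integrable_const (1:ℝ)).indicator (hA i))
        ((integrable_const (1:ℝ)).indicator (hB i)),
      integral_indicator_const _ (hA i), integral_indicator_const _ (hB i),
      measureReal_def, measureReal_def, (hrad i).1, (hrad i).2]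
    simp
  have hcross : ∀ i j : Fin d, i ≠ j → ∫ ω, v ω i * v ω j ∂μ = 0 := by
    intro i j hij
    have h : ∫ ω, v ω i * v ω j ∂μ = (∫ ω, v ω i ∂μ) * ∫ ω, v ω j ∂μ :=
      IndepFun.integral_fun_mul_eq_mul_integral (hindep.indepFun hij) (ivi i).1 (ivi j).1
    rw [h, hmean i, zero_mul]
  have hdiag : ∀ i : Fin d, ∫ ω, v ω i * v ω i ∂μ = 1 := by
    intro i
    rw [integral_congr_ae (g := fun _ => (1:ℝ)) (by
      filter_upwards [hae] with ω hω
      rcases hω i with h | h <;> rw [h] <;> norm_num)]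
    simp
  -- second moment of s
  have hs2v : ∫ ω, s ω ^ 2 ∂μ = ‖w‖ ^ 2 := by
    have hsw : ∀ ω, s ω = ∑ i, w i * v ω i := fun ω => by
      simp [hsdef, PiLp.inner_apply, RCLike.inner_apply, conj_trivial, mul_comm]
    calc ∫ ω, s ω ^ 2 ∂μ
        = ∫ ω, ∑ i, ∑ j, (w i * w j) * (v ω i * v ω j) ∂μ := by
          refine integral_congr_ae (Filter.Eventually.of_forall fun ω => ?_)
          show s ω ^ 2 = ∑ i, ∑ j, (w i * w j) * (v ω i * v ω j)
          rw [hsw, sq, Finset.sum_mul_sum]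
          exact Finset.sum_congr rfl fun i _ => Finset.sum_congr rfl fun j _ => by ring
      _ = ∑ i, ∑ j, (w i * w j) * ∫ ω, v ω i * v ω j ∂μ := by
          rw [integral_finset_sum _ (fun i _ => integrable_finset_sum _ (fun j _ => iwij i j))]
          exact Finset.sum_congr rfl fun i _ => by
            rw [integral_finset_sum _ (fun j _ => iwij i j)]
            exact Finset.sum_congr rfl fun j _ => integral_const_mul _ _
      _ = ∑ i, w i * w i := by
          refine Finset.sum_congr rfl fun i _ => ?_
          rw [Finset.sum_eq_single i]
          · rw [hdiag i, mul_one]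
          · intro j _ hji
            rw [hcross i j (Ne.symm hji), mul_zero]
          · intro h; exact absurd (Finset.mem_univ i) h
      _ = ‖w‖ ^ 2 := by
          rw [← real_inner_self_eq_norm_sq]
          simp only [PiLp.inner_apply, RCLike.inner_apply, conj_trivial]
  -- cross term as inner product
  have hinner : ∫ ω, D ω * s ω ∂μ = ⟪∫ ω, D ω • v ω ∂μ, w⟫ := by
    rw [real_inner_comm, ← integral_inner iDv w]
    refine integral_congr_ae (Filter.Eventually.of_forall fun ω => ?_)
    show D ω * s ω = ⟪w, D ω • v ω⟫
    rw [real_inner_smul_right]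
  -- split the integral
  have hsplit : ∫ ω, ((d : ℝ) * D ω ^ 2 + 2 * ((d : ℝ) - 1) * (D ω * s ω)
      + ((d : ℝ) - 2) * s ω ^ 2 + ‖w‖ ^ 2) ∂μ
      = (d : ℝ) * (∫ ω, D ω ^ 2 ∂μ) + 2 * ((d : ℝ) - 1) * (∫ ω, D ω * s ω ∂μ)
        + ((d : ℝ) - 2) * (∫ ω, s ω ^ 2 ∂μ) + ‖w‖ ^ 2 := by
    have i1 : Integrable (fun ω => (d : ℝ) * D ω ^ 2) μ := iD2.const_mul _
    have i2 : Integrable (fun ω => 2 * ((d : ℝ) - 1) * (D ω * s ω)) μ := iDs.const_mul _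
    have i3 : Integrable (fun ω => ((d : ℝ) - 2) * s ω ^ 2) μ := is2.const_mul _
    have i12 : Integrable (fun ω => (d : ℝ) * D ω ^ 2
        + 2 * ((d : ℝ) - 1) * (D ω * s ω)) μ := i1.add i2
    have i123 : Integrable (fun ω => (d : ℝ) * D ω ^ 2
        + 2 * ((d : ℝ) - 1) * (D ω * s ω) + ((d : ℝ) - 2) * s ω ^ 2) μ := i12.add i3
    rw [integral_add i123 (integrable_const _), integral_add i12 i3, integral_add i1 i2,
      integral_const_mul, integral_const_mul, integral_const_mul, integral_const]
    simp
  show ∫ ω, ‖(((f (θ + ε • v ω) - f θ) / ε) • v ω - ⟪gh, v ω⟫ • v ω + gh) - g‖ ^ 2 ∂μ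
      = (d : ℝ) * ∫ ω, D ω ^ 2 ∂μ
        + 2 * ((d : ℝ) - 1) * ⟪∫ ω, D ω • v ω ∂μ, w⟫
        + ((d : ℝ) - 1) * ‖w‖ ^ 2
  rw [integral_congr_ae hpt, hsplit, hinner, hs2v]
  ring
end
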